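/- arXiv:1104.0003 — 8 statements merged into one kernel-verified Lean document; each statement's English description precedes it below -/
import Mathlib

section
/- If v and w are twin vertices of a graph G of order at least 4, then {v,w} is an isolable set: the U-switching of G, where U is the set of vertices adjacent to both v and w, contains no edges between {v,w} and the remaining vertices. -/
/-- The `U`-switching of a graph: toggle exactly the edges between `U` and its complement. -/
def SimpleGraph.switch {V : Type*} (G : SimpleGraph V) (U : Set V) : SimpleGraph V where
  Adj a b := a ≠ b ∧ (G.Adj a b ↔ ((a ∈ U) ↔ (b ∈ U)))
  symm := ⟨fun a b => by
    rintro ⟨h, h2⟩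
    refine ⟨h.symm, ?_⟩
    rw [G.adj_comm]; tauto⟩
  loopless := ⟨fun a => by simp⟩

/-- The complete bipartite graph with parts `U` and `Uᶜ` on vertex set `V`. -/
def completeBipartite {V : Type*} (U : Set V) : SimpleGraph V where
  Adj a b := (a ∈ U ∧ b ∉ U) ∨ (b ∈ U ∧ a ∉ U)
  symm := ⟨fun a b => by tauto⟩
  loopless := ⟨fun a => by tauto⟩

/-- `W` is isolable in `G` if `2 ≤ |W|`, `2 ≤ |Wᶜ|`, and some switching of `G`
has no edges between `W` and `Wᶜ`. -/
def SimpleGraph.Isolable {V : Type*} (G : SimpleGraph V) (W : Set V) : Prop :=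
  2 ≤ W.ncard ∧ 2 ≤ Wᶜ.ncard ∧
    ∃ U : Set V, ∀ a ∈ W, ∀ b ∈ Wᶜ, ¬ (G.switch U).Adj a b

def SimpleGraph.SwitchingSeparable {V : Type*} (G : SimpleGraph V) : Prop :=
  ∃ W : Set V, G.Isolable W

/-- The number of edges of `G` among the pairs {a,c}, {a,d}, {b,c}, {b,d}. -/
noncomputable def SimpleGraph.N {V : Type*} (G : SimpleGraph V) (a b c d : V) : ℕ := by
  classical
  exact (if G.Adj a c then 1 else 0) + (if G.Adj a d then 1 else 0) +
    (if G.Adj b c then 1 else 0) + (if G.Adj b d then 1 else 0)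

/-- The circulant graph on `ZMod n` with connection set `{±1, …, ±⌊n/4⌋}`. -/
def circulant (n : ℕ) : SimpleGraph (ZMod n) :=
  SimpleGraph.fromRel (fun a b => ∃ j : ℕ, 1 ≤ j ∧ j ≤ n / 4 ∧ b = a + (j : ZMod n))

/-- Evaluation of a multilinear polynomial over GF(2), given by its coefficient function. -/
def mleval {k : ℕ} (c : Finset (Fin k) → ZMod 2) (x : Fin k → ZMod 2) : ZMod 2 :=
  ∑ s : Finset (Fin k), c s * ∏ i ∈ s, x i

/-- The multilinear polynomial `c` has degree at most `d`. -/
def mldegLE {k : ℕ} (c : Finset (Fin k) → ZMod 2) (d : ℕ) : Prop :=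
  ∀ s : Finset (Fin k), c s ≠ 0 → s.card ≤ d

/-- The graph of a quadratic polynomial: `i ~ j` iff the monomial `x i * x j` occurs. -/
def graphOf {k : ℕ} (c : Finset (Fin k) → ZMod 2) : SimpleGraph (Fin k) where
  Adj i j := i ≠ j ∧ c {i, j} ≠ 0
  symm := ⟨fun i j => by
    rintro ⟨h, h2⟩
    exact ⟨h.symm, by rwa [Finset.pair_comm]⟩⟩
  loopless := ⟨fun i => by simp⟩

/-- The polynomial `c` represents the extended Boolean function `f`
(i.e. they agree on all tuples with an even number of ones). -/
def Represents {k : ℕ} (c : Finset (Fin k) → ZMod 2) (f : (Fin k → ZMod 2) → ZMod 2) : Prop :=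
  ∀ x : Fin k → ZMod 2, (∑ i, x i) = 0 → mleval c x = f x

/-- An extended Boolean function in `k` arguments is separable if on its domain it is the
sum of two Boolean functions depending on disjoint argument sets of at most `k - 2` variables. -/
def EbfSeparable {k : ℕ} (f : (Fin k → ZMod 2) → ZMod 2) : Prop :=
  ∃ A B : Finset (Fin k), Disjoint A B ∧ A.card ≤ k - 2 ∧ B.card ≤ k - 2 ∧
    ∃ g h : (Fin k → ZMod 2) → ZMod 2,
      (∀ x y : Fin k → ZMod 2, (∀ i ∈ A, x i = y i) → g x = g y) ∧
      (∀ x y : Fin k → ZMod 2, (∀ i ∈ B, x i = y i) → h x = h y) ∧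
      ∀ x : Fin k → ZMod 2, (∑ i, x i) = 0 → f x = g x + h x

theorem twin_isolable {V : Type*} [Fintype V] (G : SimpleGraph V)
    (h4 : 4 ≤ Fintype.card V) (v w : V) (hvw : v ≠ w)
    (htwin : ∀ x : V, x ≠ v → x ≠ w → (G.Adj x v ↔ G.Adj x w)) :
    (∀ a ∈ ({v, w} : Set V), ∀ b ∉ ({v, w} : Set V),
        ¬ (G.switch {x | G.Adj x v ∧ G.Adj x w}).Adj a b) ∧
      G.Isolable {v, w} := by
  classical
  set U : Set V := {x | G.Adj x v ∧ G.Adj x w} with hU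
  have hvU : v ∉ U := fun h => G.loopless.irrefl v h.1
  have hwU : w ∉ U := fun h => G.loopless.irrefl w h.2
  have key : ∀ a ∈ ({v, w} : Set V), ∀ b ∉ ({v, w} : Set V),
      ¬ (G.switch U).Adj a b := by
    rintro a ha b hb ⟨hne, hiff⟩
    have hbv : b ≠ v := fun h => hb (by simp [h])
    have hbw : b ≠ w := fun h => hb (by simp [h])
    have hbU : b ∈ U ↔ G.Adj b v := ⟨fun h => h.1,
      fun h => ⟨h, (htwin b hbv hbw).mp h⟩⟩
    have hbU' : b ∈ U ↔ G.Adj b w := by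
      rw [hbU]; exact htwin b hbv hbw
    rcases ha with rfl | rfl
    · rw [G.adj_comm, hbU] at hiff
      simp only [hvU, false_iff] at hiff
      tauto
    · rw [G.adj_comm, hbU'] at hiff
      simp only [hwU, false_iff] at hiff
      tauto
  refine ⟨key, ?_, ?_, ⟨U, key⟩⟩
  · rw [Set.ncard_pair hvw]
  · have := Set.ncard_add_ncard_compl ({v, w} : Set V)
    rw [Set.ncard_pair hvw] at this
    have hc : Nat.card V = Fintype.card V := Nat.card_eq_fintype_card
    omega
end

section
/- For every odd n ≥ 5, there exists a graph of order n that is not switching separable but such that deleting any single vertex yields a switching separable graph of order n−1. -/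
namespace CircSep

/-- offset of `x` from `b` going clockwise. -/
def off {n : ℕ} (b x : Fin n) : ℕ :=
  if b.val ≤ x.val then x.val - b.val else x.val + n - b.val

/-- shift a vertex by `k` steps. -/
def shf {n : ℕ} (x : Fin n) (k : ℕ) : Fin n :=
  ⟨(x.val + k) % n, Nat.mod_lt _ x.pos⟩

lemma shf_val {n : ℕ} (x : Fin n) {k : ℕ} (hk : k < n) :
    (shf x k).val = if x.val + k < n then x.val + k else x.val + k - n := by
  have hx := x.isLt
  unfold shf
  dsimp only
  split_ifs with h
  · exact Nat.mod_eq_of_lt h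
  · rw [Nat.mod_eq_sub_mod (by omega)]
    exact Nat.mod_eq_of_lt (by omega)

lemma off_lt {n : ℕ} (b x : Fin n) : off b x < n := by
  have hb := b.isLt; have hx := x.isLt
  unfold off; split_ifs <;> omega

lemma shf_off {n : ℕ} (b x : Fin n) : shf b (off b x) = x := by
  have hb := b.isLt; have hx := x.isLt
  apply Fin.ext
  rw [shf_val b (off_lt b x)]
  unfold off; split_ifs <;> omega

lemma off_shf {n : ℕ} (b : Fin n) {k : ℕ} (hk : k < n) : off b (shf b k) = k := by
  have hb := b.isLt
  unfold off
  rw [shf_val b hk]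
  split_ifs <;> omega

lemma off_self {n : ℕ} (b : Fin n) : off b b = 0 := by
  unfold off; simp

lemma off_inj {n : ℕ} {b x y : Fin n} (h : off b x = off b y) : x = y := by
  have h1 := shf_off b x
  have h2 := shf_off b y
  rw [h] at h1; rw [h1] at h2; exact h2

lemma shf_zero {n : ℕ} (x : Fin n) : shf x 0 = x := by
  apply Fin.ext
  rw [shf_val x x.pos]
  have := x.isLt
  split_ifs <;> omega

lemma shf_shf {n : ℕ} (x : Fin n) {j k : ℕ} (h : j + k < n) :
    shf (shf x j) k = shf x (j + k) := by
  have hx := x.isLt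
  apply Fin.ext
  rw [shf_val _ (show k < n by omega), shf_val x (show j < n by omega),
    shf_val x h]
  split_ifs <;> omega

lemma shf_shf_n {n : ℕ} (x : Fin n) {j k : ℕ} (hj : j < n) (hk : k < n) (h : j + k = n) :
    shf (shf x j) k = x := by
  have hx := x.isLt
  apply Fin.ext
  rw [shf_val _ hk, shf_val x hj]
  split_ifs <;> omega

lemma shf_shf_wrap {n : ℕ} (x : Fin n) {j k : ℕ} (hj : j < n) (hk : k < n) (h : n ≤ j + k) :
    shf (shf x j) k = shf x (j + k - n) := by
  have hx := x.isLt
  apply Fin.ext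
  rw [shf_val _ hk, shf_val x hj, shf_val x (show j + k - n < n by omega)]
  split_ifs <;> omega

/-- circular distance -/
def cdist {n : ℕ} (x y : Fin n) : ℕ := min (off x y) (off y x)

lemma cdist_comm {n : ℕ} (x y : Fin n) : cdist x y = cdist y x := by
  unfold cdist; exact Nat.min_comm _ _

/-- Master formula: circular distance in terms of offsets from a common base. -/
lemma cdist_formula {n : ℕ} (b x y : Fin n) :
    cdist x y = if off b x ≤ off b y then min (off b y - off b x) (n - (off b y - off b x))
      else min (off b x - off b y) (n - (off b x - off b y)) := by
  have hb := b.isLt; have hx := x.isLt; have hy := y.isLt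
  unfold cdist off
  split_ifs <;> omega

/-- The circulant graph on `Fin n` with connection set `{±1, …, ±⌊n/4⌋}`. -/
def circG (n : ℕ) : SimpleGraph (Fin n) where
  Adj a b := a ≠ b ∧ cdist a b ≤ n / 4
  symm := ⟨by
    intro a b h
    exact ⟨h.1.symm, by rw [cdist_comm]; exact h.2⟩⟩
  loopless := ⟨by intro a h; exact h.1 rfl⟩

lemma exists_transition {n : ℕ} (E : Set (Fin n)) {e f : Fin n}
    (he : e ∈ E) (hf : f ∉ E) : ∃ x, x ∈ E ∧ shf x 1 ∉ E := by
  by_contra hcon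
  push_neg at hcon
  have key : ∀ k, k < n → shf e k ∈ E := by
    intro k
    induction k with
    | zero => intro _; rw [shf_zero]; exact he
    | succ k ih =>
      intro hk
      have h1 := hcon _ (ih (by omega))
      rwa [shf_shf e hk] at h1
  have h2 := key (off e f) (off_lt e f)
  rw [shf_off] at h2
  exact hf h2


section Core
variable {n : ℕ} (hn : n % 2 = 1) (h5 : 5 ≤ n)

include hn h5 in
/-- If the vertex set is partitioned into two nonempty parts with all cross pairs close,
contradiction. -/
lemma complete_case (C D : Set (Fin n))
    (hcov : ∀ v, v ∈ C ∨ v ∈ D) (hdis : ∀ v, v ∈ C → v ∈ D → False)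
    {c d : Fin n} (hc : c ∈ C) (hd : d ∈ D)
    (hclose : ∀ x ∈ C, ∀ y ∈ D, cdist x y ≤ n / 4) : False := by
  set m := n / 4 with hm
  have step : ∀ (u : Fin n) (t : ℕ), t < n → m + 1 ≤ min t (n - t) →
      ((u ∈ C → shf u t ∈ C) ∧ (u ∈ D → shf u t ∈ D)) := by
    intro u t ht hfar
    have hcd : cdist u (shf u t) = min t (n - t) := by
      rw [cdist_formula u u (shf u t), off_self, off_shf u ht]
      simp
    constructor
    · intro hu
      rcases hcov (shf u t) with h | h
      · exact h
      · exact absurd (hclose _ hu _ h) (by omega)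
    · intro hu
      rcases hcov (shf u t) with h | h
      · have := hclose _ h _ hu
        rw [cdist_comm] at this
        exact absurd this (by omega)
      · exact h
  have step1 : ∀ u : Fin n, u ∈ C → shf u 1 ∈ C := by
    intro u hu
    rcases hcov (shf u 1) with h | h
    · exact h
    · exfalso
      have hD := ((step (shf u 1) (m+1) (by omega) (by omega)).2 h)
      rw [shf_shf u (show 1 + (m+1) < n by omega)] at hD
      have hC := ((step u (m+2) (by omega) (by omega)).1 hu)
      have : (1 : ℕ) + (m+1) = m + 2 := by omega
      rw [this] at hD
      exact hdis _ hC hD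
  have key : ∀ k, k < n → shf c k ∈ C := by
    intro k
    induction k with
    | zero => intro _; rw [shf_zero]; exact hc
    | succ k ih =>
      intro hk
      have h1 := step1 _ (ih (by omega))
      rwa [shf_shf c hk] at h1
  have h2 := key (off c d) (off_lt c d)
  rw [shf_off] at h2
  exact hdis _ h2 hd

end Core

section Main
variable {n : ℕ} (hn : n % 2 = 1) (h5 : 5 ≤ n)

include hn h5 in
lemma mainA (W U : Fin n → Prop)
    (hcon : ∀ v w, W v → ¬ W w → (cdist v w ≤ n / 4 ↔ ¬(U v ↔ U w)))
    (hB2 : ∃ b1 b2 : Fin n, ¬W b1 ∧ ¬W b2 ∧ b1 ≠ b2)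
    (x : Fin n) (hxW : W x) (hxU : U x) (hx1W : W (shf x 1)) (hx1U : ¬ U (shf x 1)) :
    False := by
  set m := n / 4 with hm
  have hm1 : 1 ≤ m := by omega
  have hn45 : n = 4*m+1 ∨ n = 4*m+3 := by omega
  -- the pin lemma : any vertex in S (¬W ∧ ¬U) is exactly x - m
  have hpin : ∀ s, ¬W s → ¬U s → s = shf x (n - m) := by
    intro s hs1 hs2
    have hclose : cdist x s ≤ m := (hcon x s hxW hs1).mpr (fun hiff => hs2 (hiff.mp hxU))
    have hfar : ¬ cdist (shf x 1) s ≤ m := by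
      rw [hcon (shf x 1) s hx1W hs1]
      exact not_not_intro (iff_of_false hx1U hs2)
    have hjlt := off_lt x s
    rw [cdist_formula x x s, off_self] at hclose
    rw [cdist_formula x (shf x 1) s, off_shf x (show (1:ℕ) < n by omega)] at hfar
    have hj : off x s = n - m := by split_ifs at hclose hfar <;> omega
    rw [← hj]
    exact (shf_off x s).symm
  by_cases hS : ∃ s, ¬W s ∧ ¬U s
  · obtain ⟨s₀, hs₀1, hs₀2⟩ := hS
    have hs₀x : s₀ = shf x (n-m) := hpin _ hs₀1 hs₀2
    have hsW : ¬W (shf x (n-m)) := hs₀x ▸ hs₀1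
    have hsU : ¬U (shf x (n-m)) := hs₀x ▸ hs₀2
    by_cases hR : ∃ r, ¬W r ∧ U r
    · -- main case 6
      obtain ⟨r₀, hr₀1, hr₀2⟩ := hR
      set b : Fin n := shf x (n - (2*m+1)) with hbdef
      have hxb : x = shf b (2*m+1) :=
        (shf_shf_n x (show n-(2*m+1) < n by omega) (by omega) (by omega)).symm
      have hsb : shf x (n-m) = shf b (m+1) := by
        conv_lhs => rw [hxb]
        rw [shf_shf_wrap b (show 2*m+1 < n by omega) (show n - m < n by omega) (by omega)]
        congr 1
        omega
      have hx1b : shf x 1 = shf b (2*m+2) := by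
        conv_lhs => rw [hxb]
        rw [shf_shf b (show 2*m+1+1 < n by omega)]
      have hosb : off b (shf x (n-m)) = m + 1 := by
        rw [hsb]; exact off_shf b (by omega)
      have claim1 : ∀ v : Fin n, 1 ≤ off b v → off b v ≤ 2*m+1 → off b v ≠ m+1 →
          W v ∧ U v := by
        intro v h1 h2 h3
        have hjlt := off_lt b v
        have hnQ : ¬(W v ∧ ¬ U v) := by
          rintro ⟨hvW, hvU⟩
          have hfar : ¬ cdist v (shf x (n-m)) ≤ m := by
            rw [hcon v _ hvW hsW]
            exact not_not_intro (iff_of_false hvU hsU)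
          apply hfar
          rw [cdist_formula b v _, hosb]
          split_ifs <;> omega
        have hnR : ¬(¬W v ∧ U v) := by
          rintro ⟨hvW, hvU⟩
          have hclose : cdist (shf x 1) v ≤ m := by
            rw [hcon (shf x 1) v hx1W hvW]
            exact fun hiff => hx1U (hiff.mpr hvU)
          have hfar : ¬ cdist x v ≤ m := by
            rw [hcon x v hxW hvW]
            exact not_not_intro (iff_of_true hxU hvU)
          rw [hx1b, cdist_formula b, off_shf b (show 2*m+2 < n by omega)] at hclose
          rw [hxb, cdist_formula b, off_shf b (show 2*m+1 < n by omega)] at hfar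
          split_ifs at hclose hfar <;> omega
        have hnS : ¬(¬W v ∧ ¬U v) := by
          rintro ⟨hvW, hvU⟩
          have hv : v = shf x (n-m) := hpin v hvW hvU
          apply h3
          rw [hv, hosb]
        by_cases hvW : W v
        · by_cases hvU : U v
          · exact ⟨hvW, hvU⟩
          · exact absurd ⟨hvW, hvU⟩ hnQ
        · by_cases hvU : U v
          · exact absurd ⟨hvW, hvU⟩ hnR
          · exact absurd ⟨hvW, hvU⟩ hnS
      have claim2 : ∀ v : Fin n,
          (off b v = 0 ∨ n - m + 1 ≤ off b v ∨ (2*m+2 ≤ off b v ∧ off b v ≤ 3*m+1)) →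
          W v ∧ ¬ U v := by
        intro v hv
        have hjlt := off_lt b v
        have hnP : ¬(W v ∧ U v) := by
          rintro ⟨hvW, hvU⟩
          have hclose : cdist v (shf x (n-m)) ≤ m := by
            rw [hcon v _ hvW hsW]
            exact fun hiff => hsU (hiff.mp hvU)
          rw [cdist_formula b v _, hosb] at hclose
          split_ifs at hclose <;> omega
        have hnR : ¬(¬W v ∧ U v) := by
          rintro ⟨hvW, hvU⟩
          rcases (show (2*m+2 ≤ off b v ∧ off b v ≤ 3*m+1) ∨
              (off b v = 0 ∨ n - m + 1 ≤ off b v) by tauto) with hcase | hcase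
          · have hfar : ¬ cdist x v ≤ m := by
              rw [hcon x v hxW hvW]
              exact not_not_intro (iff_of_true hxU hvU)
            apply hfar
            rw [hxb, cdist_formula b, off_shf b (show 2*m+1 < n by omega)]
            split_ifs <;> omega
          · have hp : W (shf b 1) ∧ U (shf b 1) :=
              claim1 _ (by rw [off_shf b (show (1:ℕ) < n by omega)])
                (by rw [off_shf b (show (1:ℕ) < n by omega)]; omega)
                (by rw [off_shf b (show (1:ℕ) < n by omega)]; omega)
            have hfar : ¬ cdist (shf b 1) v ≤ m := by
              rw [hcon _ v hp.1 hvW]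
              exact not_not_intro (iff_of_true hp.2 hvU)
            apply hfar
            rw [cdist_formula b, off_shf b (show (1:ℕ) < n by omega)]
            split_ifs <;> omega
        have hnS : ¬(¬W v ∧ ¬U v) := by
          rintro ⟨hvW, hvU⟩
          have hveq : v = shf x (n-m) := hpin v hvW hvU
          have : off b v = m + 1 := by rw [hveq, hosb]
          omega
        by_cases hvW : W v
        · by_cases hvU : U v
          · exact absurd ⟨hvW, hvU⟩ hnP
          · exact ⟨hvW, hvU⟩
        · by_cases hvU : U v
          · exact absurd ⟨hvW, hvU⟩ hnR
          · exact absurd ⟨hvW, hvU⟩ hnS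
      have hjr := off_lt b r₀
      have hrs : off b r₀ ≠ m + 1 := by
        intro hw
        have : off b r₀ = off b (shf x (n-m)) := by rw [hw, hosb]
        exact hsU ((off_inj this) ▸ hr₀2)
      rcases hn45 with h41 | h43
      · rcases (show (1 ≤ off b r₀ ∧ off b r₀ ≤ 2*m+1) ∨
            (off b r₀ = 0 ∨ n - m + 1 ≤ off b r₀ ∨ (2*m+2 ≤ off b r₀ ∧ off b r₀ ≤ 3*m+1))
            by omega) with h | h
        · exact hr₀1 (claim1 r₀ h.1 h.2 hrs).1
        · exact hr₀1 (claim2 r₀ h).1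
      · have hov2 : off b (shf b (3*m+3)) = 3*m+3 := off_shf b (by omega)
        have hv2 : W (shf b (3*m+3)) ∧ ¬ U (shf b (3*m+3)) := by
          have hnP : ¬(W (shf b (3*m+3)) ∧ U (shf b (3*m+3))) := by
            rintro ⟨h1', h2'⟩
            have hclose : cdist (shf b (3*m+3)) (shf x (n-m)) ≤ m := by
              rw [hcon _ _ h1' hsW]
              exact fun hiff => hsU (hiff.mp h2')
            rw [cdist_formula b, hov2, hosb] at hclose
            split_ifs at hclose <;> omega
          have hnR : ¬(¬W (shf b (3*m+3)) ∧ U (shf b (3*m+3))) := by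
            rintro ⟨h1', h2'⟩
            have hclose : cdist (shf x 1) (shf b (3*m+3)) ≤ m := by
              rw [hcon _ _ hx1W h1']
              exact fun hiff => hx1U (hiff.mpr h2')
            rw [hx1b, cdist_formula b, off_shf b (show 2*m+2 < n by omega), hov2] at hclose
            split_ifs at hclose <;> omega
          have hnS : ¬(¬W (shf b (3*m+3)) ∧ ¬U (shf b (3*m+3))) := by
            rintro ⟨h1', h2'⟩
            have hveq := hpin _ h1' h2'
            have : off b (shf b (3*m+3)) = m + 1 := by rw [hveq, hosb]
            omega
          by_cases hvW : W (shf b (3*m+3))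
          · by_cases hvU : U (shf b (3*m+3))
            · exact absurd ⟨hvW, hvU⟩ hnP
            · exact ⟨hvW, hvU⟩
          · by_cases hvU : U (shf b (3*m+3))
            · exact absurd ⟨hvW, hvU⟩ hnR
            · exact absurd ⟨hvW, hvU⟩ hnS
        have hw0 : W b ∧ ¬ U b := claim2 b (Or.inl (off_self b))
        rcases (show (1 ≤ off b r₀ ∧ off b r₀ ≤ 2*m+1) ∨
            (off b r₀ = 0 ∨ n - m + 1 ≤ off b r₀ ∨ (2*m+2 ≤ off b r₀ ∧ off b r₀ ≤ 3*m+1)) ∨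
            off b r₀ = 3*m+3 ∨ off b r₀ = 3*m+2 by omega) with h | h | h | h
        · exact hr₀1 (claim1 r₀ h.1 h.2 hrs).1
        · exact hr₀1 (claim2 r₀ h).1
        · have : off b r₀ = off b (shf b (3*m+3)) := by rw [h, hov2]
          exact hr₀1 ((off_inj this) ▸ hv2.1)
        · have hclose : cdist b r₀ ≤ m := by
            rw [hcon b r₀ hw0.1 hr₀1]
            exact fun hiff => hw0.2 (hiff.mpr hr₀2)
          rw [cdist_formula b b r₀, off_self, h] at hclose
          split_ifs at hclose <;> omega
    · -- R empty: the two non-W elements are both pinned to the same vertex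
      have hR' : ∀ r, ¬W r → ¬ U r := by
        intro r hr hU'
        exact hR ⟨r, hr, hU'⟩
      obtain ⟨b1, b2, hb1, hb2, hne⟩ := hB2
      exact hne ((hpin b1 hb1 (hR' b1 hb1)).trans (hpin b2 hb2 (hR' b2 hb2)).symm)
  · -- S empty
    have hS' : ∀ s, ¬W s → U s := by
      intro s hs
      by_contra hU'
      exact hS ⟨s, hs, hU'⟩
    obtain ⟨b1, b2, hb1, hb2, hne⟩ := hB2
    obtain ⟨y, hyW, hy1⟩ := exists_transition {v | W v} (show x ∈ _ from hxW) hb1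
    have hy1W : ¬ W (shf y 1) := hy1
    have hy1U : U (shf y 1) := hS' _ hy1W
    have hyU : ¬ U y := by
      intro hyU
      have hfar : ¬ cdist y (shf y 1) ≤ m := by
        rw [hcon y (shf y 1) hyW hy1W]
        exact not_not_intro (iff_of_true hyU hy1U)
      apply hfar
      rw [cdist_formula y y (shf y 1), off_self, off_shf y (show (1:ℕ) < n by omega)]
      split_ifs <;> omega
    set b : Fin n := shf y (n - 3*m) with hbdef
    have hyb : y = shf b (3*m) :=
      (shf_shf_n y (show n - 3*m < n by omega) (by omega) (by omega)).symm
    have hRbound : ∀ r, ¬W r → 2*m ≤ off b r ∧ off b r ≤ 4*m := by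
      intro r hr
      have hclose : cdist y r ≤ m := by
        rw [hcon y r hyW hr]
        exact fun hiff => hyU (hiff.mpr (hS' r hr))
      have := off_lt b r
      rw [hyb, cdist_formula b, off_shf b (show 3*m < n by omega)] at hclose
      split_ifs at hclose <;> omega
    have core : ∀ r1 r2 : Fin n, ¬W r1 → ¬W r2 → off b r1 < off b r2 → False := by
      intro r1 r2 hr1 hr2 hlt
      obtain ⟨ho1a, ho1b⟩ := hRbound r1 hr1
      obtain ⟨ho2a, ho2b⟩ := hRbound r2 hr2
      have hz : ¬ W (shf b (off b r1 - m)) := by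
        intro hzW
        by_cases hzU : U (shf b (off b r1 - m))
        · have hfar : ¬ cdist (shf b (off b r1 - m)) r1 ≤ m := by
            rw [hcon _ r1 hzW hr1]
            exact not_not_intro (iff_of_true hzU (hS' r1 hr1))
          apply hfar
          rw [cdist_formula b, off_shf b (show off b r1 - m < n by omega)]
          split_ifs <;> omega
        · have hclose : cdist (shf b (off b r1 - m)) r2 ≤ m := by
            rw [hcon _ r2 hzW hr2]
            exact fun hiff => hzU (hiff.mpr (hS' r2 hr2))
          rw [cdist_formula b, off_shf b (show off b r1 - m < n by omega)] at hclose
          split_ifs at hclose <;> omega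
      have ho13 : 3*m ≤ off b r1 := by
        have hclose : cdist y (shf b (off b r1 - m)) ≤ m := by
          rw [hcon y _ hyW hz]
          exact fun hiff => hyU (hiff.mpr (hS' _ hz))
        rw [hyb, cdist_formula b, off_shf b (show 3*m < n by omega),
          off_shf b (show off b r1 - m < n by omega)] at hclose
        split_ifs at hclose <;> omega
      have hz' : ¬ W (shf b (off b r1 - 2*m)) := by
        intro hzW
        by_cases hzU : U (shf b (off b r1 - 2*m))
        · have hfar : ¬ cdist (shf b (off b r1 - 2*m)) (shf b (off b r1 - m)) ≤ m := by
            rw [hcon _ _ hzW hz]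
            exact not_not_intro (iff_of_true hzU (hS' _ hz))
          apply hfar
          rw [cdist_formula b, off_shf b (show off b r1 - 2*m < n by omega),
            off_shf b (show off b r1 - m < n by omega)]
          split_ifs <;> omega
        · have hclose : cdist (shf b (off b r1 - 2*m)) r2 ≤ m := by
            rw [hcon _ r2 hzW hr2]
            exact fun hiff => hzU (hiff.mpr (hS' r2 hr2))
          rw [cdist_formula b, off_shf b (show off b r1 - 2*m < n by omega)] at hclose
          split_ifs at hclose <;> omega
      have hclose : cdist y (shf b (off b r1 - 2*m)) ≤ m := by
        rw [hcon y _ hyW hz']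
        exact fun hiff => hyU (hiff.mpr (hS' _ hz'))
      rw [hyb, cdist_formula b, off_shf b (show 3*m < n by omega),
        off_shf b (show off b r1 - 2*m < n by omega)] at hclose
      split_ifs at hclose <;> omega
    rcases Nat.lt_trichotomy (off b b1) (off b b2) with h | h | h
    · exact core b1 b2 hb1 hb2 h
    · exact hne (off_inj h)
    · exact core b2 b1 hb2 hb1 h

end Main

section NoSep
set_option maxHeartbeats 1000000 in
example : True := trivial

variable {n : ℕ} (hn : n % 2 = 1) (h5 : 5 ≤ n)

set_option maxHeartbeats 1600000 in
include hn h5 in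
lemma noSep (W U : Set (Fin n)) (hW2 : 2 ≤ W.ncard) (hWc2 : 2 ≤ Wᶜ.ncard)
    (hU : ∀ a ∈ W, ∀ b ∈ Wᶜ, ¬ ((circG n).switch U).Adj a b) : False := by
  obtain ⟨a1, a2, ha1, ha2, hane⟩ := (Set.one_lt_ncard_iff (Set.toFinite W)).mp (by omega)
  obtain ⟨b1, b2, hb1, hb2, hbne⟩ := (Set.one_lt_ncard_iff (Set.toFinite Wᶜ)).mp (by omega)
  rw [Set.mem_compl_iff] at hb1 hb2
  have hcon : ∀ v w : Fin n, v ∈ W → w ∉ W → (cdist v w ≤ n / 4 ↔ ¬(v ∈ U ↔ w ∈ U)) := by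
    intro v w hv hw
    have hne : v ≠ w := fun h => hw (h ▸ hv)
    have h := hU v hv w hw
    have h' : ¬(v ≠ w ∧ ((v ≠ w ∧ cdist v w ≤ n / 4) ↔ (v ∈ U ↔ w ∈ U))) := h
    constructor
    · intro hc hiff
      exact h' ⟨hne, iff_of_true ⟨hne, hc⟩ hiff⟩
    · intro hniff
      by_contra hc
      exact h' ⟨hne, iff_of_false (fun hh => hc hh.2) hniff⟩
  have hcd1 : ∀ u : Fin n, cdist u (shf u 1) ≤ n / 4 := by
    intro u
    rw [cdist_formula u u (shf u 1), off_self, off_shf u (show (1:ℕ) < n by omega)]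
    split_ifs <;> omega
  by_cases hE1 : ∃ v : Fin n, v ∈ W ↔ v ∈ U
  · by_cases hE2 : ∃ v : Fin n, ¬(v ∈ W ↔ v ∈ U)
    · obtain ⟨e, he⟩ := hE1
      obtain ⟨f, hf⟩ := hE2
      obtain ⟨x, hx, hx1⟩ := exists_transition {v : Fin n | v ∈ W ↔ v ∈ U} he hf
      simp only [Set.mem_setOf_eq] at hx hx1
      by_cases hxW : x ∈ W
      · have hxU : x ∈ U := hx.mp hxW
        by_cases hx1W : shf x 1 ∈ W
        · have hx1U : shf x 1 ∉ U := fun h => hx1 (iff_of_true hx1W h)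
          exact mainA hn h5 (· ∈ W) (· ∈ U) hcon ⟨b1, b2, hb1, hb2, hbne⟩ x hxW hxU hx1W hx1U
        · have hx1U : shf x 1 ∈ U := by
            by_contra h
            exact hx1 (iff_of_false hx1W h)
          exact ((hcon x (shf x 1) hxW hx1W).mp (hcd1 x)) (iff_of_true hxU hx1U)
      · have hxU : x ∉ U := fun h => hxW (hx.mpr h)
        by_cases hx1W : shf x 1 ∈ W
        · have hx1U : shf x 1 ∉ U := fun h => hx1 (iff_of_true hx1W h)
          have h2 := (hcon (shf x 1) x hx1W hxW).mp (by rw [cdist_comm]; exact hcd1 x)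
          exact h2 (iff_of_false hx1U hxU)
        · have hx1U : shf x 1 ∈ U := by
            by_contra h
            exact hx1 (iff_of_false hx1W h)
          have hcon' : ∀ v w : Fin n, v ∉ W → ¬(w ∉ W) →
              (cdist v w ≤ n / 4 ↔ ¬(v ∉ U ↔ w ∉ U)) := by
            intro v w hv hw
            have hw' : w ∈ W := not_not.mp hw
            have h := hcon w v hw' hv
            rw [cdist_comm] at h
            rw [h]
            tauto
          exact mainA hn h5 (· ∉ W) (· ∉ U) hcon'
            ⟨a1, a2, not_not_intro ha1, not_not_intro ha2, hane⟩ x hxW hxU hx1W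
            (not_not_intro hx1U)
    · have hall : ∀ v : Fin n, v ∈ W ↔ v ∈ U := by
        intro v
        by_contra h
        exact hE2 ⟨v, h⟩
      refine complete_case hn h5 W Wᶜ (fun v => ?_) (fun v hv hv' => hv' hv) ha1
        ((Set.mem_compl_iff _ _).mpr hb1) (fun p hp s hs => ?_)
      · by_cases h : v ∈ W
        · exact Or.inl h
        · exact Or.inr h
      · rw [Set.mem_compl_iff] at hs
        have hpU : p ∈ U := (hall p).mp hp
        have hsU : s ∉ U := fun h => hs ((hall s).mpr h)
        exact (hcon p s hp hs).mpr (fun hiff => hsU (hiff.mp hpU))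
  · have hall : ∀ v : Fin n, ¬(v ∈ W ↔ v ∈ U) := by
      intro v h
      exact hE1 ⟨v, h⟩
    refine complete_case hn h5 W Wᶜ (fun v => ?_) (fun v hv hv' => hv' hv) ha1
      ((Set.mem_compl_iff _ _).mpr hb1) (fun p hp s hs => ?_)
    · by_cases h : v ∈ W
      · exact Or.inl h
      · exact Or.inr h
    · rw [Set.mem_compl_iff] at hs
      have hpU : p ∉ U := fun h => hall p (iff_of_true hp h)
      have hsU : s ∈ U := by
        by_contra h
        exact hall s (iff_of_false hs h)
      exact (hcon p s hp hs).mpr (fun hiff => hpU (hiff.mpr hsU))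

end NoSep

section Part2
variable {n : ℕ} (hn : n % 2 = 1) (h5 : 5 ≤ n)

lemma induce_adj {s : Set (Fin n)} (w₁ w₂ : ↥s) :
    ((circG n).induce s).Adj w₁ w₂ ↔ (w₁.1 ≠ w₂.1 ∧ cdist w₁.1 w₂.1 ≤ n / 4) := Iff.rfl

include hn h5 in
lemma claimC (v w : Fin n) (hj0 : off v w ≠ 0) (hja : off v w ≠ (n/2+1)/2)
    (hjb : off v w ≠ n - (n/2+1)/2) :
    (cdist (shf v (n - (n/2+1)/2)) w ≤ n/4 ↔ ¬ (cdist (shf v ((n/2+1)/2)) w ≤ n/4)) := by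
  have h1 : off v (shf v ((n/2+1)/2)) = (n/2+1)/2 := off_shf v (by omega)
  have h2 : off v (shf v (n - (n/2+1)/2)) = n - (n/2+1)/2 := off_shf v (by omega)
  have hjlt := off_lt v w
  rw [cdist_formula v (shf v (n - (n/2+1)/2)) w, cdist_formula v (shf v ((n/2+1)/2)) w,
    h1, h2]
  split_ifs <;> omega

include hn h5 in
lemma part2 (v : Fin n) : ((circG n).induce {w | w ≠ v}).SwitchingSeparable := by
  have h0 : 0 < n := by omega
  have haf : 1 ≤ (n/2+1)/2 ∧ (n/2+1)/2 < n ∧ 4 ≤ n - (n/2+1)/2 ∧ n/4 ≤ (n/2+1)/2 ∧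
      (n/2+1)/2 ≤ n/4 + 1 ∧ (n/2+1)/2 ≠ n - (n/2+1)/2 := by omega
  have hoa : off v (shf v ((n/2+1)/2)) = (n/2+1)/2 := off_shf v (by omega)
  have hob : off v (shf v (n - (n/2+1)/2)) = n - (n/2+1)/2 := off_shf v (by omega)
  have hvane : shf v ((n/2+1)/2) ≠ v := by
    intro h
    rw [h, off_self] at hoa
    omega
  have hvbne : shf v (n - (n/2+1)/2) ≠ v := by
    intro h
    rw [h, off_self] at hob
    omega
  have hvab : shf v ((n/2+1)/2) ≠ shf v (n - (n/2+1)/2) := by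
    intro h
    rw [h, hob] at hoa
    omega
  refine ⟨{w | w.1 = shf v ((n/2+1)/2) ∨ w.1 = shf v (n - (n/2+1)/2)}, ?_, ?_,
    {w | w.1 = shf v (n - (n/2+1)/2) ∨
      (w.1 ≠ shf v ((n/2+1)/2) ∧ cdist w.1 (shf v ((n/2+1)/2)) ≤ n/4)}, ?_⟩
  · have hWeq : {w : ↥{w : Fin n | w ≠ v} |
        w.1 = shf v ((n/2+1)/2) ∨ w.1 = shf v (n - (n/2+1)/2)} =
        {(⟨shf v ((n/2+1)/2), hvane⟩ : ↥{w : Fin n | w ≠ v}),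
         ⟨shf v (n - (n/2+1)/2), hvbne⟩} := by
      ext w
      simp only [Set.mem_setOf_eq, Set.mem_insert_iff, Set.mem_singleton_iff,
        Subtype.ext_iff]
    rw [hWeq, Set.ncard_pair (by simp only [ne_eq, Subtype.ext_iff]; exact hvab)]
  · have hofacts : ∀ o : ℕ, o = (if (n/2+1)/2 = 1 then 2 else 1) ∨
        o = (if (n/2+1)/2 = 3 then 2 else 3) →
        1 ≤ o ∧ o < n ∧ o ≠ (n/2+1)/2 ∧ o ≠ n - (n/2+1)/2 := by
      intro o ho
      rcases ho with ho | ho <;> rw [ho] <;> split_ifs <;> omega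
    obtain ⟨h1a, h1b, h1c, h1d⟩ := hofacts _ (Or.inl rfl)
    obtain ⟨h2a, h2b, h2c, h2d⟩ := hofacts _ (Or.inr rfl)
    have hoy1 : off v (shf v (if (n/2+1)/2 = 1 then 2 else 1)) =
        (if (n/2+1)/2 = 1 then 2 else 1) := off_shf v h1b
    have hoy2 : off v (shf v (if (n/2+1)/2 = 3 then 2 else 3)) =
        (if (n/2+1)/2 = 3 then 2 else 3) := off_shf v h2b
    have hy1v : shf v (if (n/2+1)/2 = 1 then 2 else 1) ≠ v := by
      intro h
      rw [h, off_self] at hoy1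
      omega
    have hy2v : shf v (if (n/2+1)/2 = 3 then 2 else 3) ≠ v := by
      intro h
      rw [h, off_self] at hoy2
      omega
    have h12 : (if (n/2+1)/2 = 1 then 2 else 1) ≠ (if (n/2+1)/2 = 3 then 2 else 3) := by
      split_ifs <;> omega
    have hsub : ({(⟨shf v (if (n/2+1)/2 = 1 then 2 else 1), hy1v⟩ : ↥{w : Fin n | w ≠ v}),
        ⟨shf v (if (n/2+1)/2 = 3 then 2 else 3), hy2v⟩} : Set _) ⊆
        {w : ↥{w : Fin n | w ≠ v} |
          w.1 = shf v ((n/2+1)/2) ∨ w.1 = shf v (n - (n/2+1)/2)}ᶜ := by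
      intro w hw
      rcases hw with h | h
      · intro hmem
        rcases hmem with hm | hm
        · rw [h] at hm
          simp only at hm
          rw [hm, hoa] at hoy1
          omega
        · rw [h] at hm
          simp only at hm
          rw [hm, hob] at hoy1
          omega
      · rw [Set.mem_singleton_iff] at h
        intro hmem
        rcases hmem with hm | hm
        · rw [h] at hm
          simp only at hm
          rw [hm, hoa] at hoy2
          omega
        · rw [h] at hm
          simp only at hm
          rw [hm, hob] at hoy2
          omega
    have hne12 : (⟨shf v (if (n/2+1)/2 = 1 then 2 else 1), hy1v⟩ : ↥{w : Fin n | w ≠ v}) ≠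
        ⟨shf v (if (n/2+1)/2 = 3 then 2 else 3), hy2v⟩ := by
      intro h
      rw [Subtype.ext_iff] at h
      simp only at h
      rw [h, hoy2] at hoy1
      exact h12 hoy1.symm
    calc (2 : ℕ) = ({(⟨shf v (if (n/2+1)/2 = 1 then 2 else 1), hy1v⟩ :
          ↥{w : Fin n | w ≠ v}),
          ⟨shf v (if (n/2+1)/2 = 3 then 2 else 3), hy2v⟩} : Set _).ncard :=
        (Set.ncard_pair hne12).symm
      _ ≤ _ := Set.ncard_le_ncard hsub (Set.toFinite _)
  · rintro w₁ hw₁ w₂ hw₂ ⟨hne12, hiff⟩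
    rw [induce_adj] at hiff
    have hw2a : w₂.1 ≠ shf v ((n/2+1)/2) := fun h => hw₂ (Or.inl h)
    have hw2b : w₂.1 ≠ shf v (n - (n/2+1)/2) := fun h => hw₂ (Or.inr h)
    have hw2v : w₂.1 ≠ v := w₂.2
    rcases hw₁ with h1 | h1
    · have hw1U : w₁ ∉ {w : ↥{w : Fin n | w ≠ v} | w.1 = shf v (n - (n/2+1)/2) ∨
          (w.1 ≠ shf v ((n/2+1)/2) ∧ cdist w.1 (shf v ((n/2+1)/2)) ≤ n/4)} := by
        rintro (h | h)
        · rw [h1] at h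
          exact hvab h
        · rw [h1] at h
          exact h.1 rfl
      by_cases hc : cdist (shf v ((n/2+1)/2)) w₂.1 ≤ n/4
      · have hU2 : w₂ ∈ {w : ↥{w : Fin n | w ≠ v} | w.1 = shf v (n - (n/2+1)/2) ∨
            (w.1 ≠ shf v ((n/2+1)/2) ∧ cdist w.1 (shf v ((n/2+1)/2)) ≤ n/4)} :=
          Or.inr ⟨hw2a, by rwa [cdist_comm]⟩
        have := hiff.mp ⟨by rw [h1]; exact fun h => hw2a h.symm, by rw [h1]; exact hc⟩
        exact hw1U (this.mpr hU2)
      · have hU2 : w₂ ∉ {w : ↥{w : Fin n | w ≠ v} | w.1 = shf v (n - (n/2+1)/2) ∨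
            (w.1 ≠ shf v ((n/2+1)/2) ∧ cdist w.1 (shf v ((n/2+1)/2)) ≤ n/4)} := by
          rintro (h | h)
          · exact hw2b h
          · obtain ⟨hA, hB⟩ := h
            rw [cdist_comm] at hB
            exact hc hB
        have hAdj := hiff.mpr (iff_of_false hw1U hU2)
        rw [h1] at hAdj
        exact hc hAdj.2
    · have hw1U : w₁ ∈ {w : ↥{w : Fin n | w ≠ v} | w.1 = shf v (n - (n/2+1)/2) ∨
          (w.1 ≠ shf v ((n/2+1)/2) ∧ cdist w.1 (shf v ((n/2+1)/2)) ≤ n/4)} := Or.inl h1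
      have hj0 : off v w₂.1 ≠ 0 := by
        intro h
        apply hw2v
        apply off_inj (b := v)
        rw [h, off_self]
      have hja : off v w₂.1 ≠ (n/2+1)/2 := by
        intro h
        apply hw2a
        apply off_inj (b := v)
        rw [h, hoa]
      have hjb : off v w₂.1 ≠ n - (n/2+1)/2 := by
        intro h
        apply hw2b
        apply off_inj (b := v)
        rw [h, hob]
      have hC := claimC hn h5 v w₂.1 hj0 hja hjb
      by_cases hc : cdist (shf v (n - (n/2+1)/2)) w₂.1 ≤ n/4
      · have hU2 : w₂ ∉ {w : ↥{w : Fin n | w ≠ v} | w.1 = shf v (n - (n/2+1)/2) ∨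
            (w.1 ≠ shf v ((n/2+1)/2) ∧ cdist w.1 (shf v ((n/2+1)/2)) ≤ n/4)} := by
          rintro (h | h)
          · exact hw2b h
          · obtain ⟨hA, hB⟩ := h
            rw [cdist_comm] at hB
            exact (hC.mp hc) hB
        have := hiff.mp ⟨by rw [h1]; exact fun h => hw2b h.symm, by rw [h1]; exact hc⟩
        exact hU2 (this.mp hw1U)
      · have hU2 : w₂ ∈ {w : ↥{w : Fin n | w ≠ v} | w.1 = shf v (n - (n/2+1)/2) ∨
            (w.1 ≠ shf v ((n/2+1)/2) ∧ cdist w.1 (shf v ((n/2+1)/2)) ≤ n/4)} := by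
          refine Or.inr ⟨hw2a, ?_⟩
          rw [cdist_comm]
          by_contra h
          exact hc (hC.mpr h)
        have hAdj := hiff.mpr (iff_of_true hw1U hU2)
        rw [h1] at hAdj
        exact hc hAdj.2

end Part2
end CircSep

theorem exists_nonseparable_with_separable_subgraphs (n : ℕ) (hodd : Odd n) (h5 : 5 ≤ n) :
    ∃ G : SimpleGraph (Fin n), ¬ G.SwitchingSeparable ∧
      ∀ v : Fin n, (G.induce {w | w ≠ v}).SwitchingSeparable := by
  have hn : n % 2 = 1 := Nat.odd_iff.mp hodd
  refine ⟨CircSep.circG n, ?_, fun v => CircSep.part2 hn h5 v⟩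
  rintro ⟨W, hW2, hWc2, U, hU⟩
  exact CircSep.noSep hn h5 W U hW2 hWc2 hU
end

section
/- For odd n ≥ 5, the circulant graph G_n on vertex set Z_n with connection set {±1, ±2, …, ±⌊n/4⌋} is not switching separable. -/
section NotSeparableProof

variable {n : ℕ}


/-- Edge predicate of the circulant graph, as a predicate on differences. -/
private def Ee (n : ℕ) (z : ZMod n) : Prop :=
  1 ≤ z.val ∧ (z.val ≤ n / 4 ∨ n ≤ z.val + n / 4)

private lemma Ee_nat [NeZero n] {k : ℕ} (hk : k < n) :
    Ee n (k : ZMod n) ↔ (1 ≤ k ∧ (k ≤ n / 4 ∨ n ≤ k + n / 4)) := by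
  unfold Ee
  rw [ZMod.val_cast_of_lt hk]

private lemma cast_eq_of_add [NeZero n] {w b d : ℕ} (h : w + b = d ∨ w + b = d + n) :
    (d : ZMod n) - (b : ZMod n) = (w : ZMod n) := by
  rw [eq_comm, eq_sub_iff_add_eq]
  rcases h with h | h
  · exact_mod_cast congrArg (Nat.cast : ℕ → ZMod n) h
  · have h2 : ((w + b : ℕ) : ZMod n) = ((d + n : ℕ) : ZMod n) := by rw [h]
    push_cast at h2
    simpa [ZMod.natCast_self] using h2

private lemma cast_one_sub [NeZero n] {k : ℕ} (h2 : 1 ≤ k) (hk : k ≤ n) :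
    ((n + 1 - k : ℕ) : ZMod n) = 1 - (k : ZMod n) := by
  have h3 : ((n + 1 - k : ℕ) : ZMod n) = ((n + 1 : ℕ) : ZMod n) - (k : ZMod n) := by
    rw [← Nat.cast_sub (by omega)]
  rw [h3]
  push_cast
  rw [ZMod.natCast_self]
  ring

private lemma Ee_neg [NeZero n] (z : ZMod n) : Ee n (-z) ↔ Ee n z := by
  by_cases hz : z = 0
  · subst hz; rw [neg_zero]
  · have h1 : z.val ≠ 0 := fun h => hz ((ZMod.val_eq_zero z).mp h)
    have h2 : z.val < n := ZMod.val_lt z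
    have h3 : -z = ((n - z.val : ℕ) : ZMod n) := by
      rw [Nat.cast_sub h2.le, ZMod.natCast_self, zero_sub]
      rw [ZMod.natCast_rightInverse z]
    rw [h3, Ee_nat (by omega)]
    unfold Ee
    omega

/-- The key combinatorial hypothesis extracted from switching separability,
in natural number form. -/
private def HypN (n : ℕ) (S : Set (ZMod n)) : Prop :=
  ∀ b d w q : ℕ, b < n → d < n → ((b : ℕ) : ZMod n) ∈ S → ((d : ℕ) : ZMod n) ∉ S →
    (w + b = d ∨ w + b = d + n) → (q + 1 = b ∨ q + 1 = b + n) → w < n → q < n →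
    ((1 ≤ w ∧ (w ≤ n / 4 ∨ n ≤ w + n / 4)) ↔
      ((1 ≤ q ∧ (q ≤ n / 4 ∨ n ≤ q + n / 4)) ↔ (1 ≤ d ∧ (d ≤ n / 4 ∨ n ≤ d + n / 4))))

private lemma lemA1 (hn : 5 ≤ n) (hodd : n % 2 = 1) {S : Set (ZMod n)}
    (H : HypN n S)
    (hA : ∃ d : ℕ, d < n ∧ 2 ≤ d ∧ (d ≤ n / 4 ∨ n ≤ d + n / 4) ∧ ((d : ℕ) : ZMod n) ∉ S) :
    ∃ j : ℕ, 1 ≤ j ∧ j ≤ n / 4 ∧ ((n - j : ℕ) : ZMod n) ∉ S := by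
  obtain ⟨d, hdn, hd2, hdz, hdS⟩ := hA
  rcases hdz with hz | hz
  · refine ⟨n / 4 - 1, by omega, by omega, ?_⟩
    intro hmem
    rw [show n - (n / 4 - 1) = n - n / 4 + 1 from by omega] at hmem
    have := H (n - n / 4 + 1) d (d + n / 4 - 1) (n - n / 4) (by omega) hdn hmem hdS
      (Or.inr (by omega)) (Or.inl (by omega)) (by omega) (by omega)
    omega
  · exact ⟨n - d, by omega, by omega, by rwa [show n - (n - d) = d from by omega]⟩

private lemma lemA2 (hn : 5 ≤ n) (hodd : n % 2 = 1) {S : Set (ZMod n)}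
    (H : HypN n S)
    (hA1 : ∃ j : ℕ, 1 ≤ j ∧ j ≤ n / 4 ∧ ((n - j : ℕ) : ZMod n) ∉ S) :
    ((n - n / 4 : ℕ) : ZMod n) ∉ S := by
  obtain ⟨j, hj1, hj2, hjS⟩ := hA1
  by_cases hjm : j = n / 4
  · rwa [← hjm]
  · intro hmem
    have := H (n - n / 4) (n - j) (n / 4 - j) (n - n / 4 - 1) (by omega) (by omega) hmem hjS
      (Or.inl (by omega)) (Or.inl (by omega)) (by omega) (by omega)
    omega

private lemma lemA3 (hn : 5 ≤ n) (hodd : n % 2 = 1) {S : Set (ZMod n)}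
    (H : HypN n S)
    (hA1 : ∃ j : ℕ, 1 ≤ j ∧ j ≤ n / 4 ∧ ((n - j : ℕ) : ZMod n) ∉ S) :
    ((n / 4 + 1 : ℕ) : ZMod n) ∉ S := by
  obtain ⟨j, hj1, hj2, hjS⟩ := hA1
  intro hmem
  have := H (n / 4 + 1) (n - j) (n - j - n / 4 - 1) (n / 4) (by omega) (by omega) hmem hjS
    (Or.inl (by omega)) (Or.inl (by omega)) (by omega) (by omega)
  omega

private lemma lemPin (hn : 5 ≤ n) (hodd : n % 2 = 1) {S : Set (ZMod n)}
    (h1 : ((1 : ℕ) : ZMod n) ∉ S)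
    (hA2 : ((n - n / 4 : ℕ) : ZMod n) ∉ S)
    (hnB : ∀ b : ℕ, b < n → 2 ≤ b → (b ≤ n / 4 + 1 ∨ n + 1 ≤ b + n / 4) →
      ((b : ℕ) : ZMod n) ∉ S)
    (H : HypN n S)
    (v : ℕ) (hv : v < n) (hvS : ((v : ℕ) : ZMod n) ∈ S) (hv0 : v ≠ 0) :
    v = 2 * (n / 4) + 1 := by
  have ha : ¬(2 ≤ v ∧ (v ≤ n / 4 + 1 ∨ n + 1 ≤ v + n / 4)) := fun h => hnB v hv h.1 h.2 hvS
  have hv1 : v ≠ 1 := by rintro rfl; exact h1 hvS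
  have hvnm : v ≠ n - n / 4 := by rintro rfl; exact hA2 hvS
  have hrange : n / 4 + 2 ≤ v ∧ v + n / 4 + 1 ≤ n := by omega
  have hb1 : ((n / 4 + 1 : ℕ) : ZMod n) ∉ S := hnB _ (by omega) (by omega) (by omega)
  have H1 := H v (n / 4 + 1) (n + n / 4 + 1 - v) (v - 1) hv (by omega) hvS hb1
    (Or.inr (by omega)) (Or.inl (by omega)) (by omega) (by omega)
  by_cases hm2 : 2 ≤ n / 4
  · have hbm : ((n / 4 : ℕ) : ZMod n) ∉ S := hnB _ (by omega) (by omega) (by omega)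
    have H2 := H v (n / 4) (n + n / 4 - v) (v - 1) hv (by omega) hvS hbm
      (Or.inr (by omega)) (Or.inl (by omega)) (by omega) (by omega)
    omega
  · omega

private lemma lemCaseAnotB (hn : 5 ≤ n) (hodd : n % 2 = 1) {S : Set (ZMod n)}
    (h1 : ((1 : ℕ) : ZMod n) ∉ S)
    (hA2 : ((n - n / 4 : ℕ) : ZMod n) ∉ S)
    (hnB : ∀ b : ℕ, b < n → 2 ≤ b → (b ≤ n / 4 + 1 ∨ n + 1 ≤ b + n / 4) →
      ((b : ℕ) : ZMod n) ∉ S)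
    (H : HypN n S)
    (hex : ∃ v : ℕ, v < n ∧ v ≠ 0 ∧ ((v : ℕ) : ZMod n) ∈ S) : False := by
  obtain ⟨v, hv, hv0, hvS⟩ := hex
  have hpin := lemPin hn hodd h1 hA2 hnB H v hv hvS hv0
  have Hd := H v (n - n / 4) (n - 3 * (n / 4) - 1) (v - 1) hv (by omega) hvS hA2
    (Or.inl (by omega)) (Or.inl (by omega)) (by omega) (by omega)
  have hn43 : n = 4 * (n / 4) + 3 := by omega
  by_cases hz0 : ((n - n / 4 - 1 : ℕ) : ZMod n) ∈ S
  · have := lemPin hn hodd h1 hA2 hnB H (n - n / 4 - 1) (by omega) hz0 (by omega)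
    omega
  · have He := H v (n - n / 4 - 1) (n - 3 * (n / 4) - 2) (v - 1) hv (by omega) hvS hz0
      (Or.inl (by omega)) (Or.inl (by omega)) (by omega) (by omega)
    omega

private lemma lemCaseNoAB (hn : 5 ≤ n) (hodd : n % 2 = 1) {S : Set (ZMod n)}
    (H : HypN n S)
    (hnA : ∀ d : ℕ, d < n → 2 ≤ d → (d ≤ n / 4 ∨ n ≤ d + n / 4) → ((d : ℕ) : ZMod n) ∈ S)
    (hnB : ∀ b : ℕ, b < n → 2 ≤ b → (b ≤ n / 4 + 1 ∨ n + 1 ≤ b + n / 4) →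
      ((b : ℕ) : ZMod n) ∉ S) : False := by
  have hm1 : ((n - 1 : ℕ) : ZMod n) ∈ S := hnA _ (by omega) (by omega) (by omega)
  by_cases hm2 : 2 ≤ n / 4
  · exact hnB (n - 1) (by omega) (by omega) (by omega) hm1
  · have h2S : ((2 : ℕ) : ZMod n) ∉ S := hnB 2 (by omega) (by omega) (by omega)
    have := H (n - 1) 2 3 (n - 2) (by omega) (by omega) hm1 h2S
      (Or.inr (by omega)) (Or.inl (by omega)) (by omega) (by omega)
    omega


private lemma hypN_star (hn : 5 ≤ n) [NeZero n] {S : Set (ZMod n)}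
    (h0 : ((0 : ℕ) : ZMod n) ∈ S) (h1 : ((1 : ℕ) : ZMod n) ∉ S) (H : HypN n S) :
    HypN n {z : ZMod n | (1 : ZMod n) - z ∉ S} := by
  intro b d w q hb hd hbS hdS hw hq hwn hqn
  simp only [Set.mem_setOf_eq, not_not] at hbS hdS
  -- hbS : 1 - ↑b ∉ S ; hdS : 1 - ↑d ∈ S
  have hd0 : d ≠ 0 := by
    rintro rfl
    apply h1
    simpa using hdS
  have hb1 : b ≠ 1 := by
    rintro rfl
    apply hbS
    simpa using h0
  rcases eq_or_ne d 1 with hd1 | hd1 <;> rcases eq_or_ne b 0 with hb0 | hb0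
  · -- d = 1, b = 0 : b' = 0, d' = 1
    subst hd1; subst hb0
    have hbS' : ((1 : ℕ) : ZMod n) ∉ S := by
      intro hc; apply hbS; simpa using hc
    have hdS' : ((0 : ℕ) : ZMod n) ∈ S := by
      simpa using hdS
    have := H 0 1 w (n - 1) (by omega) (by omega) hdS' hbS'
      (by omega) (by omega) hwn (by omega)
    omega
  · -- d = 1, b ≥ 2 : b' = 0, d' = n+1-b
    subst hd1
    have hdS' : ((0 : ℕ) : ZMod n) ∈ S := by simpa using hdS
    have hbS' : ((n + 1 - b : ℕ) : ZMod n) ∉ S := by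
      rw [cast_one_sub (by omega) (by omega)]
      exact hbS
    have := H 0 (n + 1 - b) w (n - 1) (by omega) (by omega) hdS' hbS'
      (by omega) (by omega) hwn (by omega)
    omega
  · -- d ≥ 2, b = 0 : b' = n+1-d, d' = 1
    subst hb0
    have hdS' : ((n + 1 - d : ℕ) : ZMod n) ∈ S := by
      rw [cast_one_sub (by omega) (by omega)]
      exact hdS
    have hbS' : ((1 : ℕ) : ZMod n) ∉ S := by
      intro hc; apply hbS; simpa using hc
    have := H (n + 1 - d) 1 w (n - d) (by omega) (by omega) hdS' hbS'
      (by omega) (by omega) hwn (by omega)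
    omega
  · -- d ≥ 2, b ≥ 2
    have hdS' : ((n + 1 - d : ℕ) : ZMod n) ∈ S := by
      rw [cast_one_sub (by omega) (by omega)]
      exact hdS
    have hbS' : ((n + 1 - b : ℕ) : ZMod n) ∉ S := by
      rw [cast_one_sub (by omega) (by omega)]
      exact hbS
    have := H (n + 1 - d) (n + 1 - b) w (n - d) (by omega) (by omega) hdS' hbS'
      (by omega) (by omega) hwn (by omega)
    omega


private lemma lemCore (hn : 5 ≤ n) (hodd : n % 2 = 1) [NeZero n] {S : Set (ZMod n)}
    (h0 : ((0 : ℕ) : ZMod n) ∈ S) (h1 : ((1 : ℕ) : ZMod n) ∉ S) (H : HypN n S)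
    (hS2 : ∃ v : ℕ, v < n ∧ v ≠ 0 ∧ ((v : ℕ) : ZMod n) ∈ S)
    (hC2 : ∃ d : ℕ, d < n ∧ d ≠ 1 ∧ ((d : ℕ) : ZMod n) ∉ S) : False := by
  set T : Set (ZMod n) := {z : ZMod n | (1 : ZMod n) - z ∉ S} with hTdef
  have HT : HypN n T := hypN_star hn h0 h1 H
  have memT : ∀ k : ℕ, 1 ≤ k → k ≤ n →
      (((n + 1 - k : ℕ) : ZMod n) ∈ T ↔ ((k : ℕ) : ZMod n) ∉ S) := by
    intro k hk1 hk2
    rw [hTdef]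
    simp only [Set.mem_setOf_eq]
    rw [cast_one_sub hk1 hk2]
    constructor
    · intro hh hc
      exact hh (by rwa [show (1 : ZMod n) - (1 - (k : ZMod n)) = (k : ZMod n) from by ring])
    · intro hh hc
      rw [show (1 : ZMod n) - (1 - (k : ZMod n)) = (k : ZMod n) from by ring] at hc
      exact hh hc
  by_cases hA : ∃ d : ℕ, d < n ∧ 2 ≤ d ∧ (d ≤ n / 4 ∨ n ≤ d + n / 4) ∧ ((d : ℕ) : ZMod n) ∉ S
  case pos =>
    have hA2 := lemA2 hn hodd H (lemA1 hn hodd H hA)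
    by_cases hB : ∃ b : ℕ, b < n ∧ 2 ≤ b ∧ (b ≤ n / 4 + 1 ∨ n + 1 ≤ b + n / 4) ∧
        ((b : ℕ) : ZMod n) ∈ S
    case pos =>
      -- translate hB into hA for T
      obtain ⟨b, hb, hb2, hbz, hbS⟩ := hB
      have hAT : ∃ d : ℕ, d < n ∧ 2 ≤ d ∧ (d ≤ n / 4 ∨ n ≤ d + n / 4) ∧
          ((d : ℕ) : ZMod n) ∉ T := by
        refine ⟨n + 1 - b, by omega, by omega, by omega, ?_⟩
        intro hc
        rw [memT b (by omega) (by omega)] at hc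
        exact hc hbS
      have hA2T := lemA2 hn hodd HT (lemA1 hn hodd HT hAT)
      -- hA2T : cast (n - n/4) ∉ T, i.e. cast (n/4+1) ∈ S
      have hA3 := lemA3 hn hodd H (lemA1 hn hodd H hA)
      apply hA3
      have := (memT (n / 4 + 1) (by omega) (by omega)).not
      rw [show n + 1 - (n / 4 + 1) = n - n / 4 from by omega] at this
      rw [not_not] at this
      exact this.mp hA2T
    case neg =>
      push_neg at hB
      apply lemCaseAnotB hn hodd h1 hA2 ?_ H hS2
      intro b hb hb2 hbz hbS
      exact absurd hbS (by
        intro hc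
        exact (hB b hb hb2 hbz) hc)
  case neg =>
    by_cases hB : ∃ b : ℕ, b < n ∧ 2 ≤ b ∧ (b ≤ n / 4 + 1 ∨ n + 1 ≤ b + n / 4) ∧
        ((b : ℕ) : ZMod n) ∈ S
    case pos =>
      -- work with T : case A(T) ∧ ¬B(T)
      obtain ⟨b, hb, hb2, hbz, hbS⟩ := hB
      have hAT : ∃ d : ℕ, d < n ∧ 2 ≤ d ∧ (d ≤ n / 4 ∨ n ≤ d + n / 4) ∧
          ((d : ℕ) : ZMod n) ∉ T := by
        refine ⟨n + 1 - b, by omega, by omega, by omega, ?_⟩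
        intro hc
        rw [memT b (by omega) (by omega)] at hc
        exact hc hbS
      have hA2T := lemA2 hn hodd HT (lemA1 hn hodd HT hAT)
      push_neg at hA
      apply lemCaseAnotB hn hodd ?h1T hA2T ?hnBT HT ?hexT
      case h1T =>
        rw [show (1 : ℕ) = n + 1 - n from by omega, memT n (by omega) (by omega), not_not]
        rwa [show ((n : ℕ) : ZMod n) = ((0 : ℕ) : ZMod n) from by
          simp [ZMod.natCast_self]]
      case hnBT =>
        intro b' hb' hb2' hbz'
        rw [show (b' : ℕ) = n + 1 - (n + 1 - b') from by omega,
          memT (n + 1 - b') (by omega) (by omega), not_not]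
        exact hA (n + 1 - b') (by omega) (by omega) (by omega)
      case hexT =>
        obtain ⟨d, hd, hd1, hdS⟩ := hC2
        have hd0 : d ≠ 0 := by
          rintro rfl; exact hdS h0
        refine ⟨n + 1 - d, by omega, by omega, ?_⟩
        rw [memT d (by omega) (by omega)]
        exact hdS
    case neg =>
      push_neg at hA hB
      apply lemCaseNoAB hn hodd H
      · intro d hd hd2 hdz
        exact hA d hd hd2 hdz
      · intro b hb hb2 hbz
        exact hB b hb hb2 hbz

private lemma adj_iff (hn : 5 ≤ n) (a b : ZMod n) :
    (circulant n).Adj a b ↔ a ≠ b ∧ Ee n (b - a) := by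
  haveI : NeZero n := ⟨by omega⟩
  rw [circulant, SimpleGraph.fromRel_adj]
  constructor
  · rintro ⟨hab, h | h⟩
    · obtain ⟨j, hj1, hj2, hj3⟩ := h
      refine ⟨hab, ?_⟩
      have hd : b - a = (j : ZMod n) := by rw [hj3]; ring
      rw [hd, Ee_nat (by omega)]
      omega
    · obtain ⟨j, hj1, hj2, hj3⟩ := h
      refine ⟨hab, ?_⟩
      have hd : b - a = ((n - j : ℕ) : ZMod n) := by
        rw [Nat.cast_sub (by omega), ZMod.natCast_self, hj3]; ring
      rw [hd, Ee_nat (by omega)]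
      omega
  · rintro ⟨hab, h1, h2⟩
    refine ⟨hab, ?_⟩
    have hv : ((b - a).val : ZMod n) = b - a := ZMod.natCast_rightInverse _
    rcases h2 with h2 | h2
    · exact Or.inl ⟨(b - a).val, h1, h2, by rw [hv]; ring⟩
    · refine Or.inr ⟨n - (b - a).val, ?_, by omega, ?_⟩
      · have := ZMod.val_lt (b - a); omega
      · rw [Nat.cast_sub (ZMod.val_lt (b - a)).le, ZMod.natCast_self, hv]; ring

private lemma exists_boundary (hn : 5 ≤ n) {W : Set (ZMod n)}
    (hW : W.Nonempty) (hWc : Wᶜ.Nonempty) : ∃ x, x ∈ W ∧ x + 1 ∉ W := by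
  haveI : NeZero n := ⟨by omega⟩
  by_contra hcon
  push_neg at hcon
  obtain ⟨x0, hx0⟩ := hW
  have hall : ∀ k : ℕ, x0 + (k : ZMod n) ∈ W := by
    intro k
    induction k with
    | zero => simpa using hx0
    | succ k ih =>
      have := hcon _ ih
      have he : x0 + ((k + 1 : ℕ) : ZMod n) = x0 + (k : ZMod n) + 1 := by
        push_cast; ring
      rwa [he]
  obtain ⟨y, hy⟩ := hWc
  apply hy
  have := hall (y - x0).val
  rwa [ZMod.natCast_rightInverse (y - x0), add_sub_cancel] at this

private lemma prop_step {E1 A1 A2 A3 A4 X B D : Prop}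
    (k1 : ¬(E1 ↔ (A1 ↔ A2))) (he1 : E1)
    (k2 : ¬(D ↔ (A1 ↔ A4)))
    (k3 : ¬(B ↔ (A3 ↔ A2)))
    (k4 : ¬(X ↔ (A3 ↔ A4))) : X ↔ (B ↔ D) := by
  tauto

private lemma switch_not_adj {V : Type*} {G : SimpleGraph V} {U : Set V} {a b : V}
    (h : ¬ (G.switch U).Adj a b) (hne : a ≠ b) : ¬(G.Adj a b ↔ ((a ∈ U) ↔ (b ∈ U))) :=
  fun hc => h ⟨hne, hc⟩

theorem circulant_not_separable (n : ℕ) (hodd : Odd n) (h5 : 5 ≤ n) :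
    ¬ (circulant n).SwitchingSeparable := by
  rintro ⟨W, hW2, hWc2, U, hsw⟩
  haveI : NeZero n := ⟨by omega⟩
  have hodd' : n % 2 = 1 := Nat.odd_iff.mp hodd
  -- boundary point
  obtain ⟨x, hxW, hx1W⟩ := exists_boundary h5
    (Set.nonempty_of_ncard_ne_zero (show W.ncard ≠ 0 by omega))
    (Set.nonempty_of_ncard_ne_zero (show Wᶜ.ncard ≠ 0 by omega))
  -- translated set
  have hSdef : ∀ z : ZMod n, z ∈ {z : ZMod n | x + z ∈ W} ↔ x + z ∈ W := fun z => Iff.rfl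
  set S : Set (ZMod n) := {z : ZMod n | x + z ∈ W} with hS
  have h0 : ((0 : ℕ) : ZMod n) ∈ S := by
    rw [hSdef]
    simpa using hxW
  have h1 : ((1 : ℕ) : ZMod n) ∉ S := by
    rw [hSdef]
    simpa using hx1W
  -- the basic switching relation
  have base : ∀ β δ : ZMod n, β ∈ S → δ ∉ S →
      ¬(Ee n (δ - β) ↔ ((x + β ∈ U) ↔ (x + δ ∈ U))) := by
    intro β δ hβ hδ
    have hβ' : x + β ∈ W := (hSdef β).mp hβ
    have hδ' : x + δ ∈ Wᶜ := fun hc => hδ ((hSdef δ).mpr hc)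
    have hne : x + β ≠ x + δ := fun h => hδ' (h ▸ hβ')
    have h2 := switch_not_adj (hsw _ hβ' _ hδ') hne
    rw [adj_iff h5] at h2
    have he : x + δ - (x + β) = δ - β := by ring
    rw [he] at h2
    tauto
  have hyp : ∀ β δ : ZMod n, β ∈ S → δ ∉ S →
      (Ee n (δ - β) ↔ (Ee n (β - 1) ↔ Ee n δ)) := by
    intro β δ hβ hδ
    have h0' : (0 : ZMod n) ∈ S := by simpa using h0
    have h1' : (1 : ZMod n) ∉ S := by simpa using h1
    have k1 := base 0 1 h0' h1'
    have k2 := base 0 δ h0' hδ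
    have k3 := base β 1 hβ h1'
    have k4 := base β δ hβ hδ
    rw [sub_zero] at k1 k2
    have he1 : Ee n (1 : ZMod n) := by
      rw [show (1 : ZMod n) = ((1 : ℕ) : ZMod n) from by norm_num, Ee_nat (by omega)]
      omega
    have heneg : Ee n ((1 : ZMod n) - β) ↔ Ee n (β - 1) := by
      rw [show (1 : ZMod n) - β = -(β - 1) from by ring, Ee_neg]
    simp only [add_zero] at k1 k2
    rw [heneg] at k3
    exact prop_step k1 he1 k2 k3 k4
  have H : HypN n S := by
    intro b d w q hb hd hbS hdS hw hq hwn hqn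
    have := hyp _ _ hbS hdS
    rw [cast_eq_of_add hw] at this
    rw [show ((b : ℕ) : ZMod n) - 1 = ((q : ℕ) : ZMod n) from by
      rw [← Nat.cast_one]; exact cast_eq_of_add hq] at this
    rwa [Ee_nat hwn, Ee_nat hqn, Ee_nat hd] at this
  -- cardinalities
  have hinj : Function.Injective (fun w : ZMod n => w - x) := by
    intro a b h
    have := congrArg (· + x) h
    simpa using this
  have hSim : S = (fun w => w - x) '' W := by
    ext z
    rw [hSdef]
    simp only [Set.mem_image]
    constructor
    · intro h; exact ⟨x + z, h, by ring⟩
    · rintro ⟨w, hw, rfl⟩; simpa [add_sub_cancel] using hw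
  have hScim : Sᶜ = (fun w => w - x) '' Wᶜ := by
    ext z
    rw [Set.mem_compl_iff, hSdef]
    simp only [Set.mem_image, Set.mem_compl_iff]
    constructor
    · intro h; exact ⟨x + z, h, by ring⟩
    · rintro ⟨w, hw, rfl⟩
      intro hc
      apply hw
      rwa [show x + (w - x) = w from by ring] at hc
  have hS2' : 2 ≤ S.ncard := by
    rw [hSim, Set.ncard_image_of_injective _ hinj]; exact hW2
  have hC2' : 2 ≤ Sᶜ.ncard := by
    rw [hScim, Set.ncard_image_of_injective _ hinj]; exact hWc2
  have hS2 : ∃ v : ℕ, v < n ∧ v ≠ 0 ∧ ((v : ℕ) : ZMod n) ∈ S := by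
    obtain ⟨z, hzS, hz0⟩ := Set.exists_ne_of_one_lt_ncard (show 1 < S.ncard by omega) (0 : ZMod n)
    refine ⟨z.val, ZMod.val_lt z, ?_, ?_⟩
    · intro h
      exact hz0 ((ZMod.val_eq_zero z).mp h)
    · rwa [ZMod.natCast_rightInverse z]
  have hC2 : ∃ d : ℕ, d < n ∧ d ≠ 1 ∧ ((d : ℕ) : ZMod n) ∉ S := by
    obtain ⟨z, hzS, hz1⟩ := Set.exists_ne_of_one_lt_ncard (show 1 < Sᶜ.ncard by omega) (1 : ZMod n)
    refine ⟨z.val, ZMod.val_lt z, ?_, ?_⟩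
    · intro h
      apply hz1
      have h2 := ZMod.natCast_rightInverse z
      rw [h] at h2
      simpa using h2.symm
    · rw [ZMod.natCast_rightInverse z]; exact hzS
  exact lemCore h5 hodd' h0 h1 H hS2 hC2


end NotSeparableProof
end

section
/- For odd n ≥ 5, deleting any vertex of the circulant graph G_n (on Z_n with connection set {±1, …, ±⌊n/4⌋}) yields a switching separable graph. Specifically, after deleting v_0, the pair {v_m, v_{−m}} with m = ⌊(n+1)/4⌋ is isolable. -/
lemma circ_adj {n : ℕ} {a b : ZMod n} :
    (circulant n).Adj a b ↔
      a ≠ b ∧ ∃ j : ℕ, 1 ≤ j ∧ j ≤ n / 4 ∧ (b = a + (j : ZMod n) ∨ a = b + (j : ZMod n)) := by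
  rw [circulant, SimpleGraph.fromRel_adj]
  constructor
  · rintro ⟨h, (⟨j, h1, h2, h3⟩ | ⟨j, h1, h2, h3⟩)⟩ <;> exact ⟨h, j, h1, h2, by tauto⟩
  · rintro ⟨h, j, h1, h2, (h3 | h3)⟩
    · exact ⟨h, Or.inl ⟨j, h1, h2, h3⟩⟩
    · exact ⟨h, Or.inr ⟨j, h1, h2, h3⟩⟩


lemma circ_adj_add_mp {n : ℕ} {a b : ZMod n} (v : ZMod n) (h : (circulant n).Adj a b) :
    (circulant n).Adj (a + v) (b + v) := by
  rw [circ_adj] at h ⊢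
  obtain ⟨hne, j, h1, h2, h3⟩ := h
  refine ⟨fun he => hne (add_right_cancel he), j, h1, h2, ?_⟩
  rcases h3 with h3 | h3
  · left; rw [h3]; ring
  · right; rw [h3]; ring


lemma circ_adj_add {n : ℕ} {a b : ZMod n} (v : ZMod n) :
    (circulant n).Adj (a + v) (b + v) ↔ (circulant n).Adj a b :=
  ⟨fun h => by simpa using circ_adj_add_mp (-v) h, circ_adj_add_mp v⟩


lemma adj_iff_val {n : ℕ} [NeZero n] {a b : ZMod n} (hab : a ≠ b) :
    (circulant n).Adj a b ↔
      (1 ≤ (b - a).val ∧ (b - a).val ≤ n / 4) ∨ (1 ≤ (a - b).val ∧ (a - b).val ≤ n / 4) := by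
  have hn : 0 < n := Nat.pos_of_ne_zero (NeZero.ne n)
  have ht : n / 4 < n := Nat.div_lt_self hn (by norm_num)
  rw [circ_adj]
  constructor
  · rintro ⟨-, j, h1, h2, (h3 | h3)⟩
    · left
      have hval : (b - a).val = j := by
        rw [h3]; rw [show a + (j : ZMod n) - a = (j : ZMod n) by ring,
          ZMod.val_natCast, Nat.mod_eq_of_lt (by omega)]
      omega
    · right
      have hval : (a - b).val = j := by
        rw [h3]; rw [show b + (j : ZMod n) - b = (j : ZMod n) by ring,
          ZMod.val_natCast, Nat.mod_eq_of_lt (by omega)]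
      omega
  · rintro (⟨h1, h2⟩ | ⟨h1, h2⟩)
    · refine ⟨hab, (b - a).val, h1, h2, Or.inl ?_⟩
      rw [ZMod.natCast_val, ZMod.cast_id]; ring
    · refine ⟨hab, (a - b).val, h1, h2, Or.inr ?_⟩
      rw [ZMod.natCast_val, ZMod.cast_id]; ring


lemma key_xor {n : ℕ} (hodd : Odd n) (h5 : 5 ≤ n) (b : ZMod n)
    (hb0 : b ≠ 0) (hbm : b ≠ (((n + 1) / 4 : ℕ) : ZMod n))
    (hbm' : b ≠ -(((n + 1) / 4 : ℕ) : ZMod n)) :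
    ((circulant n).Adj (((n + 1) / 4 : ℕ) : ZMod n) b ↔
      ¬ (circulant n).Adj (-(((n + 1) / 4 : ℕ) : ZMod n)) b) := by
  haveI : NeZero n := ⟨by omega⟩
  have hn2 : n % 2 = 1 := Nat.odd_iff.mp hodd
  set M : ZMod n := (((n + 1) / 4 : ℕ) : ZMod n) with hM
  set m : ℕ := (n + 1) / 4 with hm
  have hmn : m < n := by omega
  have hMval : M.val = m := by rw [hM, ZMod.val_natCast, Nat.mod_eq_of_lt hmn]
  -- basic facts about the two distances
  set d : ℕ := (b - M).val with hd
  set e : ℕ := (b + M).val with he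
  have hdn : d < n := ZMod.val_lt _
  have hen : e < n := ZMod.val_lt _
  have hd0 : d ≠ 0 := by
    rw [hd, Ne, ZMod.val_eq_zero, sub_eq_zero]; exact fun h => hbm h
  have he0 : e ≠ 0 := by
    rw [he, Ne, ZMod.val_eq_zero]
    intro h
    exact hbm' (eq_neg_of_add_eq_zero_left h)
  have hcast_d : ((d : ℕ) : ZMod n) = b - M := by rw [hd, ZMod.natCast_val, ZMod.cast_id]
  have hcast_e : ((e : ℕ) : ZMod n) = b + M := by rw [he, ZMod.natCast_val, ZMod.cast_id]
  have hdm : d + m ≠ n := by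
    intro h
    apply hb0
    have : ((d + m : ℕ) : ZMod n) = b := by push_cast [hcast_d, ← hM]; ring
    rw [h, ZMod.natCast_self] at this
    exact this.symm
  have hneg1 : (M - b).val = n - d := by
    have : M - b = -(b - M) := by ring
    rw [this, ZMod.neg_val, if_neg (sub_ne_zero.mpr hbm)]
  have hneg2 : (-M - b).val = n - e := by
    have : -M - b = -(b + M) := by ring
    rw [this, ZMod.neg_val, if_neg ?_]
    intro h
    exact hbm' (eq_neg_of_add_eq_zero_left h)
  have hrel : e = (d + 2 * m) % n := by
    have : ((d + 2 * m : ℕ) : ZMod n) = b + M := by push_cast [hcast_d, ← hM]; ring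
    rw [he, ← this, ZMod.val_natCast]
  have hrel' : e = d + 2 * m ∨ e + n = d + 2 * m := by
    rcases Nat.lt_or_ge (d + 2 * m) n with h | h
    · left; rw [hrel, Nat.mod_eq_of_lt h]
    · right
      have h2 : d + 2 * m < 2 * n := by omega
      rw [hrel, Nat.mod_eq_sub_mod h, Nat.mod_eq_of_lt (by omega)]
      omega
  rw [adj_iff_val (fun h => hbm h.symm), adj_iff_val (fun h => hbm' h.symm), sub_neg_eq_add,
    hneg1, hneg2, ← hd, ← he]
  omega


lemma isol (n : ℕ) (hodd : Odd n) (h5 : 5 ≤ n) (v : ZMod n) :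
    ((circulant n).induce {w | w ≠ v}).Isolable
      {x | (x : ZMod n) = (((n + 1) / 4 : ℕ) : ZMod n) + v ∨
           (x : ZMod n) = -(((n + 1) / 4 : ℕ) : ZMod n) + v} := by
  haveI : NeZero n := ⟨by omega⟩
  set M : ZMod n := (((n + 1) / 4 : ℕ) : ZMod n) with hM
  have hMval : M.val = (n + 1) / 4 := by
    rw [hM, ZMod.val_natCast, Nat.mod_eq_of_lt (by omega)]
  have hM0 : M ≠ 0 := by
    intro h; rw [← ZMod.val_eq_zero, hMval] at h; omega
  have h2M : M ≠ -M := by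
    intro h
    have h2 : M + M = 0 := by nth_rewrite 1 [h]; exact neg_add_cancel M
    have h3 : (((n + 1) / 4 + (n + 1) / 4 : ℕ) : ZMod n) = 0 := by
      push_cast [← hM]; exact h2
    rw [ZMod.natCast_eq_zero_iff] at h3
    have := Nat.le_of_dvd (by omega) h3
    omega
  have hMv : M + v ≠ v := fun h => hM0 (by simpa using h)
  have hMv' : -M + v ≠ v := fun h => hM0 (by simpa [neg_eq_zero] using h)
  have hMM : M + v ≠ -M + v := fun h => h2M (by simpa using h)
  set W : Set ↥{w : ZMod n | w ≠ v} :=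
    {x | (x : ZMod n) = M + v ∨ (x : ZMod n) = -M + v} with hWdef
  have hW : W = {⟨M + v, hMv⟩, ⟨-M + v, hMv'⟩} := by
    ext x
    simp [hWdef, Subtype.ext_iff]
  have hWcard : W.ncard = 2 := by
    rw [hW]; exact Set.ncard_pair (fun h => hMM (congrArg Subtype.val h))
  have hcardV : Nat.card ↥{w : ZMod n | w ≠ v} = n - 1 := by
    rw [Nat.card_eq_fintype_card]
    have : Fintype.card {w : ZMod n // ¬(w = v)} =
        Fintype.card (ZMod n) - Fintype.card {w : ZMod n // w = v} :=
      Fintype.card_subtype_compl _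
    rw [Fintype.card_subtype_eq, ZMod.card] at this
    convert this using 1
    exact Fintype.card_congr (Equiv.refl _)
  have hWc : W.ncard + Wᶜ.ncard = n - 1 := by
    rw [Set.ncard_add_ncard_compl, hcardV]
  refine ⟨by omega, by omega, ?_⟩
  set U : Set ↥{w : ZMod n | w ≠ v} :=
    {x | (x : ZMod n) = M + v ∨
      ((x : ZMod n) ≠ -M + v ∧ ¬ (circulant n).Adj (M + v) (x : ZMod n))} with hUdef
  refine ⟨U, ?_⟩
  rintro a ha b hb ⟨hne, hiff⟩
  have hb' : ¬((b : ZMod n) = M + v ∨ (b : ZMod n) = -M + v) := hb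
  push_neg at hb'
  obtain ⟨hb1, hb2⟩ := hb'
  have hbv : (b : ZMod n) ≠ v := b.prop
  have hiff' : (circulant n).Adj (a : ZMod n) (b : ZMod n) ↔ (a ∈ U ↔ b ∈ U) := hiff
  have hbU : b ∈ U ↔ ¬ (circulant n).Adj (M + v) (b : ZMod n) := by
    rw [hUdef]
    simp only [Set.mem_setOf_eq]
    constructor
    · rintro (h | ⟨-, h⟩)
      · exact absurd h hb1
      · exact h
    · exact fun h => Or.inr ⟨hb2, h⟩
  -- key XOR at the translated point
  have hb0' : (b : ZMod n) - v ≠ 0 := sub_ne_zero.mpr hbv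
  have hbm1 : (b : ZMod n) - v ≠ M := fun h => hb1 (by rw [sub_eq_iff_eq_add] at h; exact h)
  have hbm2 : (b : ZMod n) - v ≠ -M := fun h => hb2 (by rw [sub_eq_iff_eq_add] at h; exact h)
  have hxor := key_xor hodd h5 ((b : ZMod n) - v) hb0' (by rwa [← hM]) (by rwa [← hM])
  rw [← hM] at hxor
  have htr1 : (circulant n).Adj (M + v) (b : ZMod n) ↔ (circulant n).Adj M ((b : ZMod n) - v) := by
    conv_lhs => rw [show (b : ZMod n) = ((b : ZMod n) - v) + v from (sub_add_cancel _ _).symm]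
    exact circ_adj_add v
  have htr2 : (circulant n).Adj (-M + v) (b : ZMod n) ↔
      (circulant n).Adj (-M) ((b : ZMod n) - v) := by
    conv_lhs => rw [show (b : ZMod n) = ((b : ZMod n) - v) + v from (sub_add_cancel _ _).symm]
    exact circ_adj_add v
  rcases ha with ha | ha
  · -- a = M + v
    have haU : a ∈ U := Or.inl ha
    have hAdj : (circulant n).Adj (M + v) (b : ZMod n) ↔ (a ∈ U ↔ b ∈ U) := by
      rw [← ha]; exact hiff'
    by_cases h : (circulant n).Adj (M + v) (b : ZMod n)
    · exact (hbU.mp ((hAdj.mp h).mp haU)) h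
    · exact h (hAdj.mpr ⟨fun _ => hbU.mpr h, fun _ => haU⟩)
  · -- a = -M + v
    have haU : a ∉ U := by
      rintro (h | ⟨h, -⟩)
      · exact hMM (by rw [← h, ha])
      · exact h ha
    have hAdj : (circulant n).Adj (-M + v) (b : ZMod n) ↔ (a ∈ U ↔ b ∈ U) := by
      rw [← ha]; exact hiff'
    by_cases h : (circulant n).Adj (M + v) (b : ZMod n)
    · -- then ¬Adj(-M+v, b), but also b ∉ U so the iff (a∈U ↔ b∈U) holds
      have hnQ : ¬ (circulant n).Adj (-M + v) (b : ZMod n) := by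
        rw [htr2]; exact hxor.mp (htr1.mp h)
      have hbU' : b ∉ U := fun hb' => (hbU.mp hb') h
      exact hnQ (hAdj.mpr ⟨fun ha' => absurd ha' haU, fun hb' => absurd hb' hbU'⟩)
    · -- then Adj(-M+v, b) and b ∈ U, so a ∈ U, contradiction
      have hQ : (circulant n).Adj (-M + v) (b : ZMod n) := by
        rw [htr2]
        by_contra hq
        exact h (htr1.mpr (hxor.mpr hq))
      exact haU ((hAdj.mp hQ).mpr (hbU.mpr h))

theorem circulant_delete_vertex_separable (n : ℕ) (hodd : Odd n) (h5 : 5 ≤ n) :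
    (∀ v : ZMod n, ((circulant n).induce {w | w ≠ v}).SwitchingSeparable) ∧
      ((circulant n).induce {w : ZMod n | w ≠ 0}).Isolable
        {x | (x : ZMod n) = (((n + 1) / 4 : ℕ) : ZMod n) ∨
             (x : ZMod n) = -(((n + 1) / 4 : ℕ) : ZMod n)} := by
  constructor
  · intro v
    exact ⟨_, isol n hodd h5 v⟩
  · have h := isol n hodd h5 0
    simpa using h
end

section
/- In the circulant graph G_n (odd n ≥ 5, connection set {±1,…,±⌊n/4⌋}) with m = ⌊(n+1)/4⌋ and u_i = v_{im}, for every index i the consecutive quadruple satisfies N(u_i, u_{i+1}; u_{i+2}, u_{i+3}) = 1, i.e., exactly one of the pairs {u_i,u_{i+2}}, {u_i,u_{i+3}}, {u_{i+1},u_{i+2}}, {u_{i+1},u_{i+3}} is an edge. -/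
lemma circulant_adj_diff_iff (n : ℕ) [NeZero n] (x : ZMod n) (c : ℕ) :
    (circulant n).Adj x (x + (c : ZMod n)) ↔
      ∃ j : ℕ, 1 ≤ j ∧ j ≤ n / 4 ∧
        ((c : ZMod n) = (j : ZMod n) ∨ (c : ZMod n) + (j : ZMod n) = 0) := by
  have hj0 : ∀ j : ℕ, 1 ≤ j → j ≤ n / 4 → (j : ZMod n) ≠ 0 := by
    intro j h1 h2 h
    have := (ZMod.natCast_eq_zero_iff j n).mp h
    have := Nat.le_of_dvd (by omega) this
    have : n / 4 < n := Nat.div_lt_self (Nat.pos_of_ne_zero (NeZero.ne n)) (by norm_num)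
    omega
  constructor
  · rintro ⟨hne, h | h⟩
    · obtain ⟨j, h1, h2, h3⟩ := h
      exact ⟨j, h1, h2, Or.inl (by have := h3; rwa [add_right_inj] at this)⟩
    · obtain ⟨j, h1, h2, h3⟩ := h
      refine ⟨j, h1, h2, Or.inr ?_⟩
      have : x + ((c : ZMod n) + j) = x + 0 := by rw [← add_assoc, ← h3, add_zero]
      exact add_left_cancel this
  · rintro ⟨j, h1, h2, h3⟩
    rcases h3 with h3 | h3
    · refine ⟨?_, Or.inl ⟨j, h1, h2, by rw [h3]⟩⟩
      rw [h3]
      intro h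
      exact hj0 j h1 h2 (add_left_cancel (a := x) (by rw [add_zero, ← h])).symm
    · refine ⟨?_, Or.inr ⟨j, h1, h2, ?_⟩⟩
      · intro h
        have hc0 : (c : ZMod n) = 0 := add_left_cancel (a := x) (by rw [add_zero, ← h])
        rw [hc0, zero_add] at h3
        exact hj0 j h1 h2 h3
      · rw [add_assoc, h3, add_zero]

theorem circulant_consecutive_N_eq_one (n : ℕ) (hodd : Odd n) (h5 : 5 ≤ n) (i : ZMod n) :
    (circulant n).N
      (i * (((n + 1) / 4 : ℕ) : ZMod n))
      ((i + 1) * (((n + 1) / 4 : ℕ) : ZMod n))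
      ((i + 2) * (((n + 1) / 4 : ℕ) : ZMod n))
      ((i + 3) * (((n + 1) / 4 : ℕ) : ZMod n)) = 1 := by
  haveI : NeZero n := ⟨by omega⟩
  set M : ℕ := (n + 1) / 4 with hM
  have hb : (i + 1) * (M : ZMod n) = i * M + (M : ℕ) := by push_cast; ring
  have hc1 : (i + 2) * (M : ZMod n) = i * M + ((2 * M : ℕ) : ZMod n) := by push_cast; ring
  have hd1 : (i + 3) * (M : ZMod n) = i * M + ((3 * M : ℕ) : ZMod n) := by push_cast; ring
  have hc2 : (i + 2) * (M : ZMod n) = (i + 1) * M + ((M : ℕ) : ZMod n) := by push_cast; ring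
  have hd2 : (i + 3) * (M : ZMod n) = (i + 1) * M + ((2 * M : ℕ) : ZMod n) := by push_cast; ring
  -- generic non-adjacency for a difference c with n/4 < c and n/4 < n - c
  have notadj : ∀ (x : ZMod n) (c : ℕ), n / 4 < c → c + n / 4 < n →
      ¬ (circulant n).Adj x (x + (c : ZMod n)) := by
    intro x c h1 h2 h
    rw [circulant_adj_diff_iff] at h
    obtain ⟨j, hj1, hj2, hj3⟩ := h
    rcases hj3 with h3 | h3
    · rw [ZMod.natCast_eq_natCast_iff] at h3
      have : c % n = j % n := h3
      rw [Nat.mod_eq_of_lt (by omega), Nat.mod_eq_of_lt (by omega)] at this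
      omega
    · have : ((c + j : ℕ) : ZMod n) = 0 := by push_cast; exact h3
      have hd := (ZMod.natCast_eq_zero_iff _ n).mp this
      have := Nat.le_of_dvd (by omega) hd
      rcases hd with ⟨t, ht⟩
      have : t = 1 := by nlinarith
      omega
  obtain ⟨t, ht⟩ := hodd
  rcases Nat.even_or_odd t with he | ho
  · -- n = 4k + 1, k ≥ 1
    obtain ⟨k, hk⟩ := he
    have hn : n = 4 * k + 1 := by omega
    have hk1 : 1 ≤ k := by omega
    have hMk : M = k := by omega
    have hq : n / 4 = k := by omega
    have hAC : ¬ (circulant n).Adj (i * M) ((i + 2) * M) := by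
      rw [hc1]; exact notadj _ _ (by omega) (by omega)
    have hAD : ¬ (circulant n).Adj (i * M) ((i + 3) * M) := by
      rw [hd1]; exact notadj _ _ (by omega) (by omega)
    have hBD : ¬ (circulant n).Adj ((i + 1) * M) ((i + 3) * M) := by
      rw [hd2]; exact notadj _ _ (by omega) (by omega)
    have hBC : (circulant n).Adj ((i + 1) * M) ((i + 2) * M) := by
      rw [hc2, circulant_adj_diff_iff]
      exact ⟨k, hk1, by omega, Or.inl (by rw [hMk])⟩
    simp [SimpleGraph.N, hAC, hAD, hBC, hBD]
  · -- n = 4k + 3, k ≥ 1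
    obtain ⟨k, hk⟩ := ho
    have hn : n = 4 * k + 3 := by omega
    have hk1 : 1 ≤ k := by omega
    have hMk : M = k + 1 := by omega
    have hq : n / 4 = k := by omega
    have hAC : ¬ (circulant n).Adj (i * M) ((i + 2) * M) := by
      rw [hc1]; exact notadj _ _ (by omega) (by omega)
    have hBC : ¬ (circulant n).Adj ((i + 1) * M) ((i + 2) * M) := by
      rw [hc2]; exact notadj _ _ (by omega) (by omega)
    have hBD : ¬ (circulant n).Adj ((i + 1) * M) ((i + 3) * M) := by
      rw [hd2]; exact notadj _ _ (by omega) (by omega)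
    have hAD : (circulant n).Adj (i * M) ((i + 3) * M) := by
      rw [hd1, circulant_adj_diff_iff]
      refine ⟨k, hk1, by omega, Or.inr ?_⟩
      have : ((3 * M + k : ℕ) : ZMod n) = 0 := by
        rw [show 3 * M + k = n by omega]; exact ZMod.natCast_self n
      push_cast at this ⊢
      exact this
    simp [SimpleGraph.N, hAC, hAD, hBC, hBD]
end

section
/- The set of graphs of quadratic polynomials representing a fixed quadratic extended Boolean function in n arguments is closed under switching and forms a single switching class. -/
private lemma mleval_add' {k : ℕ} (c d : Finset (Fin k) → ZMod 2) (x : Fin k → ZMod 2) :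
    mleval (fun s => c s + d s) x = mleval c x + mleval d x := by
  unfold mleval
  rw [← Finset.sum_add_distrib]
  exact Finset.sum_congr rfl (fun s _ => by ring)

private lemma mleval_eval_zero {k : ℕ} (c : Finset (Fin k) → ZMod 2) :
    mleval c (fun _ => 0) = c ∅ := by
  unfold mleval
  rw [Finset.sum_eq_single ∅]
  · simp
  · intro s _ hs
    obtain ⟨a, ha⟩ := Finset.nonempty_iff_ne_empty.2 hs
    rw [Finset.prod_eq_zero ha rfl, mul_zero]
  · simp

private lemma sum_chi_pair {k : ℕ} {i j : Fin k} (hij : i ≠ j) :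
    (∑ t, (if t ∈ ({i, j} : Finset (Fin k)) then (1:ZMod 2) else 0)) = 0 := by
  rw [Finset.sum_ite_mem, Finset.univ_inter, Finset.sum_const, Finset.card_pair hij]
  rw [nsmul_eq_mul]
  decide

private lemma mleval_eval_pair {k : ℕ} (c : Finset (Fin k) → ZMod 2) {i j : Fin k} (hij : i ≠ j) :
    mleval c (fun t => if t ∈ ({i, j} : Finset (Fin k)) then 1 else 0)
      = c ∅ + c {j} + (c {i} + c {i, j}) := by
  unfold mleval
  have h1 : ∀ s : Finset (Fin k),
      (∏ t ∈ s, (if t ∈ ({i, j} : Finset (Fin k)) then (1:ZMod 2) else 0))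
        = if s ⊆ {i, j} then 1 else 0 := by
    intro s
    by_cases h : s ⊆ ({i,j} : Finset (Fin k))
    · rw [if_pos h]; exact Finset.prod_eq_one (fun t ht => if_pos (h ht))
    · rw [if_neg h]
      obtain ⟨t, hts, htn⟩ := Finset.not_subset.1 h
      exact Finset.prod_eq_zero hts (if_neg htn)
  simp only [h1, mul_ite, mul_one, mul_zero]
  rw [← Finset.sum_filter]
  have h2 : Finset.univ.filter (fun s => s ⊆ ({i,j} : Finset (Fin k)))
      = ({i,j} : Finset (Fin k)).powerset := by
    ext s; simp [Finset.mem_powerset]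
  rw [h2, show ({i,j} : Finset (Fin k)) = insert i {j} from rfl,
    Finset.sum_powerset_insert (by simp [hij])]
  have h3 : ({j} : Finset (Fin k)).powerset = {∅, {j}} := by
    ext s; simp [Finset.mem_powerset, Finset.subset_singleton_iff]
  rw [h3, Finset.sum_insert (by simpa using (Finset.singleton_ne_empty j).symm), Finset.sum_singleton,
    Finset.sum_insert (by simpa using (Finset.singleton_ne_empty j).symm), Finset.sum_singleton]
  simp



noncomputable def qadd {k : ℕ} (Uf : Finset (Fin k)) (s : Finset (Fin k)) : ZMod 2 :=
  (if s ∈ Uf.image (fun i => ({i} : Finset (Fin k))) then 1 else 0) +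
  (if s ∈ (Uf ×ˢ Ufᶜ).image (fun q => ({q.1, q.2} : Finset (Fin k))) then 1 else 0)

private lemma qadd_card {k : ℕ} (Uf : Finset (Fin k)) (s : Finset (Fin k))
    (h : qadd Uf s ≠ 0) : s.card ≤ 2 := by
  unfold qadd at h
  by_contra hc
  apply h
  rw [if_neg, if_neg]
  · simp
  · intro hmem
    obtain ⟨q, _, heq⟩ := Finset.mem_image.1 hmem
    apply hc
    rw [← heq]
    calc ({q.1, q.2} : Finset (Fin k)).card ≤ ({q.2} : Finset (Fin k)).card + 1 :=
          Finset.card_insert_le _ _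
      _ ≤ 2 := by simp
  · intro hmem
    obtain ⟨i, _, heq⟩ := Finset.mem_image.1 hmem
    apply hc
    rw [← heq]
    simp

private lemma zmod2_key : ∀ A B : ZMod 2, A + B = 0 → A + A * B = 0 := by decide

private lemma qadd_eval {k : ℕ} (Uf : Finset (Fin k)) (x : Fin k → ZMod 2)
    (hx : (∑ i, x i) = 0) : mleval (qadd Uf) x = 0 := by
  unfold mleval qadd
  simp only [add_mul, Finset.sum_add_distrib, ite_mul, one_mul, zero_mul]
  rw [Finset.sum_ite_mem, Finset.sum_ite_mem, Finset.univ_inter, Finset.univ_inter]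
  rw [Finset.sum_image (fun a _ b _ h => Finset.singleton_injective h)]
  rw [Finset.sum_image ?inj]
  case inj =>
    rintro ⟨a, b⟩ hab ⟨c, d⟩ hcd h
    simp only [Finset.mem_coe, Finset.mem_product, Finset.mem_compl] at hab hcd
    have hac : a = c := by
      have ha : a ∈ ({c, d} : Finset (Fin k)) := by rw [show ({c, d} : Finset (Fin k)) = {a, b} from h.symm]; simp
      rcases Finset.mem_insert.1 ha with h' | h'
      · exact h'
      · exact absurd (Finset.mem_singleton.1 h' ▸ hab.1) hcd.2
    have hbd : b = d := by
      have hb : b ∈ ({c, d} : Finset (Fin k)) := by rw [show ({c, d} : Finset (Fin k)) = {a, b} from h.symm]; simp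
      rcases Finset.mem_insert.1 hb with h' | h'
      · exact absurd (h' ▸ hcd.1) hab.2
      · exact Finset.mem_singleton.1 h'
    rw [Prod.ext_iff]; exact ⟨hac, hbd⟩
  have step : ∀ q ∈ Uf ×ˢ Ufᶜ, (∏ t ∈ ({q.1, q.2} : Finset (Fin k)), x t) = x q.1 * x q.2 := by
    rintro ⟨a, b⟩ hab
    simp only [Finset.mem_product, Finset.mem_compl] at hab
    have hne : a ≠ b := fun h => hab.2 (h ▸ hab.1)
    exact Finset.prod_pair hne
  rw [Finset.sum_congr rfl step]
  simp only [Finset.prod_singleton]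
  rw [Finset.sum_product]
  have : ∀ i ∈ Uf, (∑ j ∈ Ufᶜ, x i * x j) = x i * ∑ j ∈ Ufᶜ, x j :=
    fun i _ => (Finset.mul_sum _ _ _).symm
  rw [Finset.sum_congr rfl this, ← Finset.sum_mul]
  exact zmod2_key _ _ (by rw [Finset.sum_add_sum_compl Uf x]; exact hx)

private lemma qadd_pair {k : ℕ} (Uf : Finset (Fin k)) {a b : Fin k} (hab : a ≠ b) :
    qadd Uf {a, b} = if (a ∈ Uf ∧ b ∉ Uf) ∨ (b ∈ Uf ∧ a ∉ Uf) then 1 else 0 := by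
  unfold qadd
  rw [if_neg, zero_add]
  · have hiff : (({a, b} : Finset (Fin k)) ∈
        (Uf ×ˢ Ufᶜ).image (fun q => ({q.1, q.2} : Finset (Fin k)))) ↔
        ((a ∈ Uf ∧ b ∉ Uf) ∨ (b ∈ Uf ∧ a ∉ Uf)) := by
      constructor
      · intro hmem
        obtain ⟨q, hq, heq⟩ := Finset.mem_image.1 hmem
        simp only [Finset.mem_product, Finset.mem_compl] at hq
        have ha : a ∈ ({q.1, q.2} : Finset (Fin k)) := by rw [heq]; simp
        have hb : b ∈ ({q.1, q.2} : Finset (Fin k)) := by rw [heq]; simp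
        simp only [Finset.mem_insert, Finset.mem_singleton] at ha hb
        obtain ⟨u, v⟩ := q
        simp only at ha hb ⊢
        rcases ha with rfl | rfl <;> rcases hb with h | rfl
        · exact absurd h.symm hab
        · exact Or.inl ⟨hq.1, hq.2⟩
        · rw [← h] at hq; exact Or.inr ⟨hq.1, hq.2⟩
        · exact absurd rfl hab
      · rintro (⟨h1, h2⟩ | ⟨h1, h2⟩)
        · exact Finset.mem_image.2 ⟨(a, b), by simp [Finset.mem_product, h1, h2], rfl⟩
        · exact Finset.mem_image.2 ⟨(b, a), by simp [Finset.mem_product, h1, h2],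
            by simp [Finset.pair_comm]⟩
    exact if_congr hiff rfl rfl
  · intro hmem
    obtain ⟨i, _, heq⟩ := Finset.mem_image.1 hmem
    apply hab
    have ha : a ∈ ({i} : Finset (Fin k)) := by rw [heq]; simp
    have hb : b ∈ ({i} : Finset (Fin k)) := by rw [heq]; simp
    rw [Finset.mem_singleton.1 ha, Finset.mem_singleton.1 hb]

private lemma graphOf_adj {k : ℕ} (c : Finset (Fin k) → ZMod 2) (a b : Fin k) :
    (graphOf c).Adj a b ↔ (a ≠ b ∧ c {a, b} ≠ 0) := Iff.rfl

private lemma switch_adj {V : Type*} (G : SimpleGraph V) (U : Set V) (a b : V) :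
    (G.switch U).Adj a b ↔ (a ≠ b ∧ (G.Adj a b ↔ ((a ∈ U) ↔ (b ∈ U)))) := Iff.rfl

private lemma zmod2_part1 : ∀ A : ZMod 2, (A + 1 ≠ 0 ↔ ¬ A ≠ 0) := by decide

set_option synthInstance.maxSize 400 in
set_option maxHeartbeats 1000000 in
private lemma zmod2_part2 : ∀ A0 A1 A2 A3 A4 A5 A6 A7 : ZMod 2, A0 = A1 →
    A0 + A6 + (A4 + A2) = A1 + A7 + (A5 + A3) →
    ((A3 ≠ 0) ↔ ((A2 ≠ 0) ↔ ((A4 + A5 = 1) ↔ (A6 + A7 = 1)))) := by decide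


theorem graphs_of_representations_form_switching_class (n : ℕ)
    (f : (Fin n → ZMod 2) → ZMod 2) :
    (∀ p : Finset (Fin n) → ZMod 2, mldegLE p 2 → Represents p f →
      ∀ U : Set (Fin n), ∃ p' : Finset (Fin n) → ZMod 2,
        mldegLE p' 2 ∧ Represents p' f ∧ graphOf p' = (graphOf p).switch U) ∧
    (∀ p p' : Finset (Fin n) → ZMod 2, mldegLE p 2 → Represents p f →
      mldegLE p' 2 → Represents p' f →
        ∃ U : Set (Fin n), graphOf p' = (graphOf p).switch U) := by
  classical
  constructor
  · intro p hdeg hrep U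
    set Uf : Finset (Fin n) := Finset.univ.filter (· ∈ U) with hUf
    have hmemUf : ∀ i : Fin n, i ∈ Uf ↔ i ∈ U := by
      intro i; simp [hUf]
    refine ⟨fun s => p s + qadd Uf s, ?_, ?_, ?_⟩
    · intro s hs
      have hs' : p s + qadd Uf s ≠ 0 := hs
      by_contra hc
      push_neg at hc
      have h2 : qadd Uf s = 0 := by
        by_contra h
        exact absurd (qadd_card Uf s h) (by omega)
      rw [h2, add_zero] at hs'
      exact absurd (hdeg s hs') (by omega)
    · intro x hx
      rw [mleval_add', qadd_eval Uf x hx, add_zero]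
      exact hrep x hx
    · ext a b
      rw [graphOf_adj, switch_adj, graphOf_adj]
      by_cases hab : a = b
      · simp [hab]
      · rw [qadd_pair Uf hab]
        simp only [ne_eq, hab, not_false_eq_true, true_and]
        by_cases hA : a ∈ U <;> by_cases hB : b ∈ U
        · rw [if_neg (by simp [hmemUf, hA, hB])]
          simp [hA, hB]
        · rw [if_pos (by simp [hmemUf, hA, hB])]
          simp only [hA, hB, iff_true, iff_false, not_not]
          generalize p {a, b} = A
          revert A
          decide
        · rw [if_pos (by simp [hmemUf, hA, hB])]
          simp only [hA, hB, iff_true, iff_false, false_iff, not_not]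
          generalize p {a, b} = A
          revert A
          decide
        · rw [if_neg (by simp [hmemUf, hA, hB])]
          simp [hA, hB]
  · intro p p' hdp hrp hdp' hrp'
    refine ⟨{i : Fin n | p {i} + p' {i} = 1}, ?_⟩
    have h0 : p ∅ = p' ∅ := by
      have h1 := hrp (fun _ => 0) (by simp)
      have h2 := hrp' (fun _ => 0) (by simp)
      rw [mleval_eval_zero] at h1 h2
      rw [h1, h2]
    ext a b
    rw [graphOf_adj, switch_adj, graphOf_adj]
    by_cases hab : a = b
    · simp [hab]
    · have hx := sum_chi_pair (i := a) (j := b) hab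
      have h1 := hrp _ hx
      have h2 := hrp' _ hx
      rw [mleval_eval_pair p hab] at h1
      rw [mleval_eval_pair p' hab] at h2
      have key : p ∅ + p {b} + (p {a} + p {a, b})
          = p' ∅ + p' {b} + (p' {a} + p' {a, b}) := by rw [h1, h2]
      simp only [ne_eq, hab, not_false_eq_true, true_and, Set.mem_setOf_eq]
      exact zmod2_part2 (p ∅) (p' ∅) (p {a, b}) (p' {a, b}) (p {a}) (p' {a})
        (p {b}) (p' {b}) h0 key
end

section
/- A quadratic extended Boolean function f in n ≥ 4 arguments is separable if and only if the graph of any quadratic polynomial representing f is switching separable. -/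
/-! ### Auxiliary material -/

def flip2 {n : ℕ} (a b : Fin n) (x : Fin n → ZMod 2) : Fin n → ZMod 2 :=
  fun i => x i + (if i = a then 1 else 0) + (if i = b then 1 else 0)

lemma z2_four (z : ZMod 2) : z + z + z + z = 0 := by revert z; decide
lemma z2_key8 (u v α β δ α' β' δ' : ZMod 2) :
    u*v + (u+α+β)*(v+α'+β') + (u+α+δ)*(v+α'+δ') + (u+β+δ)*(v+β'+δ') =
    α*β'+β*α'+α*δ'+δ*α'+β*δ'+δ*β' := by revert u v α β δ α' β' δ'; decide
lemma z2_card1 (u α β δ : ZMod 2) : u + (u+α+β) + (u+α+δ) + (u+β+δ) = 0 := by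
  revert u α β δ; decide
lemma z2_pair1 (u v : ZMod 2) : u + v + v + u = 0 := by revert u v; decide
lemma z2_pair2 (u v : ZMod 2) : u + v + u + v = 0 := by revert u v; decide
lemma z2_pair3 (u v : ZMod 2) : u + u + v + v = 0 := by revert u v; decide
lemma z2_ne_zero {z : ZMod 2} : z ≠ 0 ↔ z = 1 := by revert z; decide
lemma z2_cancel {u v : ZMod 2} (h : u + v = 0) : v = u := by revert u v; decide
lemma z2_xor (z1 z2 : ZMod 2) : ¬((z1 + z2 = 1) ↔ ((z1 = 1) ↔ (z2 = 1))) := by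
  revert z1 z2; decide
lemma z2_solve {w x y z : ZMod 2} (h : w + x + y + z = 0) : w = (x + z) + y := by
  revert w x y z; decide
lemma z2_solve3 {a b c : ZMod 2} (h : a + b + c = 0) : a = b + c := by
  revert a b c; decide

lemma pair_eq_pair_iff {α : Type*} [DecidableEq α] {i j a b : α} :
    ({i, j} : Finset α) = {a, b} ↔
      (i = a ∧ j = b) ∨ (i = b ∧ j = a) ∨ (i = j ∧ (j = a ∨ j = b)) ∧ a = b := by
  constructor
  · intro h
    have hi : i = a ∨ i = b := by
      have : i ∈ ({a, b} : Finset α) := h ▸ (by simp)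
      simpa using this
    have hj : j = a ∨ j = b := by
      have : j ∈ ({a, b} : Finset α) := h ▸ (by simp)
      simpa using this
    have ha : a = i ∨ a = j := by
      have : a ∈ ({i, j} : Finset α) := h ▸ (by simp)
      simpa using this
    have hb : b = i ∨ b = j := by
      have : b ∈ ({i, j} : Finset α) := h ▸ (by simp)
      simpa using this
    rcases hi with hi | hi <;> rcases hj with hj | hj <;> subst hi <;> subst hj <;> tauto
  · rintro (⟨rfl, rfl⟩ | ⟨rfl, rfl⟩ | ⟨⟨rfl, (rfl | rfl)⟩, rfl⟩) <;> simp [Finset.pair_comm]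

lemma pair_ne_pair_of_ne {α : Type*} [DecidableEq α] {a b d : α} (hab : a ≠ b) (had : a ≠ d)
    (hbd : b ≠ d) : ({a, b} : Finset α) ≠ {a, d} := by
  intro h
  have : d ∈ ({a, b} : Finset α) := h ▸ (by simp)
  simp [had.symm, hbd.symm] at this

lemma pairInd {n : ℕ} {i j a b : Fin n} (hij : i ≠ j) (hab : a ≠ b) :
    (if i = a then (1:ZMod 2) else 0) * (if j = b then 1 else 0)
      + (if i = b then (1:ZMod 2) else 0) * (if j = a then 1 else 0)
    = if ({i, j} : Finset (Fin n)) = {a, b} then 1 else 0 := by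
  by_cases h1 : i = a <;> by_cases h2 : i = b <;> by_cases h3 : j = a <;> by_cases h4 : j = b <;>
    simp_all [pair_eq_pair_iff]

theorem rect {n : ℕ} (p : Finset (Fin n) → ZMod 2) (hp : mldegLE p 2) (x : Fin n → ZMod 2)
    {a b d : Fin n} (hab : a ≠ b) (had : a ≠ d) (hbd : b ≠ d) :
    mleval p x + mleval p (flip2 a b x) + mleval p (flip2 a d x) + mleval p (flip2 b d x)
      = p {a, b} + p {a, d} + p {b, d} := by
  classical
  unfold mleval
  rw [← Finset.sum_add_distrib, ← Finset.sum_add_distrib, ← Finset.sum_add_distrib]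
  have hterm : ∀ s : Finset (Fin n),
      p s * ∏ i ∈ s, x i + p s * ∏ i ∈ s, flip2 a b x i + p s * ∏ i ∈ s, flip2 a d x i
        + p s * ∏ i ∈ s, flip2 b d x i
      = (if s = {a, b} then p s else 0) + (if s = {a, d} then p s else 0)
        + (if s = {b, d} then p s else 0) := by
    intro s
    by_cases hps : p s = 0
    · simp [hps]
    have hcard := hp s hps
    have hc : s.card = 0 ∨ s.card = 1 ∨ s.card = 2 := by omega
    have hne2 : ∀ u v : Fin n, u ≠ v → s.card ≠ 2 → ¬ (s = {u, v}) := by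
      rintro u v huv hcc rfl
      exact hcc (Finset.card_pair huv)
    rcases hc with h | h | h
    · rw [Finset.card_eq_zero] at h
      subst h
      rw [if_neg (hne2 a b hab (by simp)), if_neg (hne2 a d had (by simp)),
        if_neg (hne2 b d hbd (by simp))]
      simpa using z2_four (p ∅)
    · obtain ⟨i, rfl⟩ := Finset.card_eq_one.mp h
      rw [if_neg (hne2 a b hab (by simp)), if_neg (hne2 a d had (by simp)),
        if_neg (hne2 b d hbd (by simp))]
      rw [Finset.prod_singleton, Finset.prod_singleton, Finset.prod_singleton,
        Finset.prod_singleton, ← mul_add, ← mul_add, ← mul_add]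
      rw [show x i + flip2 a b x i + flip2 a d x i + flip2 b d x i = 0 from by
        have := z2_card1 (x i) (if i = a then 1 else 0) (if i = b then 1 else 0)
          (if i = d then 1 else 0)
        simp only [flip2] at *
        linear_combination this]
      simp
    · obtain ⟨i, j, hij, rfl⟩ := Finset.card_eq_two.mp h
      rw [Finset.prod_pair hij, Finset.prod_pair hij, Finset.prod_pair hij,
        Finset.prod_pair hij, ← mul_add, ← mul_add, ← mul_add]
      have h8 := z2_key8 (x i) (x j) (if i = a then (1:ZMod 2) else 0) (if i = b then 1 else 0)
        (if i = d then 1 else 0) (if j = a then (1:ZMod 2) else 0) (if j = b then 1 else 0)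
        (if j = d then 1 else 0)
      have e : x i * x j + flip2 a b x i * flip2 a b x j + flip2 a d x i * flip2 a d x j
          + flip2 b d x i * flip2 b d x j
          = (if ({i, j} : Finset (Fin n)) = {a, b} then (1:ZMod 2) else 0)
            + (if ({i, j} : Finset (Fin n)) = {a, d} then (1:ZMod 2) else 0)
            + (if ({i, j} : Finset (Fin n)) = {b, d} then (1:ZMod 2) else 0) := by
        rw [← pairInd hij hab, ← pairInd hij had, ← pairInd hij hbd]
        simp only [flip2]
        linear_combination h8
      rw [e]
      have d12 : ({a, b} : Finset (Fin n)) ≠ {a, d} := pair_ne_pair_of_ne hab had hbd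
      have d13 : ({a, b} : Finset (Fin n)) ≠ {b, d} := by
        rw [Finset.pair_comm]
        exact pair_ne_pair_of_ne (Ne.symm hab) hbd had
      have d23 : ({a, d} : Finset (Fin n)) ≠ {b, d} := by
        rw [Finset.pair_comm a d, Finset.pair_comm b d]
        exact pair_ne_pair_of_ne (Ne.symm had) (Ne.symm hbd) hab
      by_cases c1 : ({i, j} : Finset (Fin n)) = {a, b} <;>
        by_cases c2 : ({i, j} : Finset (Fin n)) = {a, d} <;>
        by_cases c3 : ({i, j} : Finset (Fin n)) = {b, d} <;>
        first
          | exact absurd (c1.symm.trans c2) d12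
          | exact absurd (c1.symm.trans c3) d13
          | exact absurd (c2.symm.trans c3) d23
          | simp [c1, c2, c3, mul_add]
  rw [Finset.sum_congr rfl (fun s _ => hterm s)]
  rw [Finset.sum_add_distrib, Finset.sum_add_distrib]
  simp [Finset.sum_ite_eq']

lemma sum_flip2 {n : ℕ} {a b : Fin n} (hab : a ≠ b) (x : Fin n → ZMod 2)
    (hx : ∑ i, x i = 0) : ∑ i, flip2 a b x i = 0 := by
  have h1 : ∀ c : Fin n, (∑ i, if i = c then (1:ZMod 2) else 0) = 1 := by
    intro c; simp
  calc ∑ i, flip2 a b x i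
      = (∑ i, x i) + (∑ i, if i = a then (1:ZMod 2) else 0)
        + (∑ i, if i = b then (1:ZMod 2) else 0) := by
        rw [← Finset.sum_add_distrib, ← Finset.sum_add_distrib]; rfl
    _ = 0 := by rw [h1, h1, hx]; decide

lemma local_cancel {n : ℕ} (g : (Fin n → ZMod 2) → ZMod 2) (A : Finset (Fin n))
    (hA : A.card ≤ 1) (hg : ∀ x y, (∀ i ∈ A, x i = y i) → g x = g y) (x : Fin n → ZMod 2)
    {a b d : Fin n} (hab : a ≠ b) (had : a ≠ d) (hbd : b ≠ d) :
    g x + g (flip2 a b x) + g (flip2 a d x) + g (flip2 b d x) = 0 := by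
  have hc : A.card = 0 ∨ A.card = 1 := by omega
  rcases hc with h | h
  · rw [Finset.card_eq_zero] at h
    subst h
    have e1 : g x = g (flip2 a b x) := hg _ _ (by simp)
    have e2 : g x = g (flip2 a d x) := hg _ _ (by simp)
    have e3 : g x = g (flip2 b d x) := hg _ _ (by simp)
    rw [← e1, ← e2, ← e3]
    exact z2_four _
  · obtain ⟨c, rfl⟩ := Finset.card_eq_one.mp h
    have key : ∀ y z : Fin n → ZMod 2, y c = z c → g y = g z := by
      intro y z hc'
      apply hg
      intro i hi
      rw [Finset.mem_singleton] at hi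
      subst hi
      exact hc'
    by_cases h1 : c = a
    · subst h1
      have e1 : g x = g (flip2 b d x) := key _ _ (by simp [flip2, hab, had])
      have e2 : g (flip2 c b x) = g (flip2 c d x) := key _ _ (by simp [flip2, hab, had])
      rw [e1, e2]
      exact z2_pair1 _ _
    by_cases h2 : c = b
    · subst h2
      have e1 : g x = g (flip2 a d x) := key _ _ (by simp [flip2, Ne.symm hab, hbd])
      have e2 : g (flip2 a c x) = g (flip2 c d x) := key _ _ (by simp [flip2, Ne.symm hab, hbd])
      rw [e1, e2]
      exact z2_pair2 _ _
    by_cases h3 : c = d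
    · subst h3
      have e1 : g x = g (flip2 a b x) := key _ _ (by simp [flip2, Ne.symm had, Ne.symm hbd])
      have e2 : g (flip2 a c x) = g (flip2 b c x) := key _ _ (by simp [flip2, Ne.symm had, Ne.symm hbd])
      rw [e1, e2]
      exact z2_pair3 _ _
    · have e1 : g x = g (flip2 a b x) := key _ _ (by simp [flip2, h1, h2])
      have e2 : g x = g (flip2 a d x) := key _ _ (by simp [flip2, h1, h3])
      have e3 : g x = g (flip2 b d x) := key _ _ (by simp [flip2, h2, h3])
      rw [← e1, ← e2, ← e3]
      exact z2_four _

lemma cross_rel {n : ℕ} (f : (Fin n → ZMod 2) → ZMod 2)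
    (p : Finset (Fin n) → ZMod 2) (hp : mldegLE p 2) (hrep : Represents p f)
    (A B : Finset (Fin n)) (hdisj : Disjoint A B)
    (g h : (Fin n → ZMod 2) → ZMod 2)
    (hg : ∀ x y, (∀ i ∈ A, x i = y i) → g x = g y)
    (hh : ∀ x y, (∀ i ∈ B, x i = y i) → h x = h y)
    (hsum : ∀ x, (∑ i, x i) = 0 → f x = g x + h x) :
    ∀ a ∈ A, ∀ c ∈ A, ∀ b d : Fin n, b ∉ A → d ∉ A →
      p {a, b} + p {a, d} + p {c, b} + p {c, d} = 0 := by
  intro a ha c hc b d hb hd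
  by_cases hbd : b = d
  · subst hbd
    exact z2_pair3 _ _
  have h0 : (∑ i : Fin n, (fun _ => (0:ZMod 2)) i) = 0 := by simp
  have key : ∀ a' : Fin n, a' ∈ A →
      p {a', b} + p {a', d} + p {b, d} =
        h (fun _ => 0) + h (flip2 a' b (fun _ => 0)) + h (flip2 a' d (fun _ => 0))
          + h (flip2 b d (fun _ => 0)) := by
    intro a' ha'
    have hab' : a' ≠ b := fun e => hb (e ▸ ha')
    have had' : a' ≠ d := fun e => hd (e ▸ ha')
    have R := rect p hp (fun _ => 0) hab' had' hbd
    have e1 := sum_flip2 hab' (fun _ => (0:ZMod 2)) h0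
    have e2 := sum_flip2 had' (fun _ => (0:ZMod 2)) h0
    have e3 := sum_flip2 hbd (fun _ => (0:ZMod 2)) h0
    rw [hrep _ h0, hrep _ e1, hrep _ e2, hrep _ e3, hsum _ h0, hsum _ e1, hsum _ e2,
      hsum _ e3] at R
    have gz : g (fun _ => (0:ZMod 2)) + g (flip2 a' b (fun _ => 0))
        + g (flip2 a' d (fun _ => 0)) + g (flip2 b d (fun _ => 0)) = 0 := by
      have ga1 : g (fun _ => (0:ZMod 2)) = g (flip2 b d (fun _ => 0)) := by
        apply hg; intro i hi
        have k1 : i ≠ b := fun e => hb (e ▸ hi)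
        have k2 : i ≠ d := fun e => hd (e ▸ hi)
        simp [flip2, k1, k2]
      have ga2 : g (flip2 a' b (fun _ => 0)) = g (flip2 a' d (fun _ => 0)) := by
        apply hg; intro i hi
        have k1 : i ≠ b := fun e => hb (e ▸ hi)
        have k2 : i ≠ d := fun e => hd (e ▸ hi)
        simp [flip2, k1, k2]
      rw [ga1, ga2]
      exact z2_pair1 _ _
    rw [← R]
    have expand : g (fun _ => (0:ZMod 2)) + h (fun _ => (0:ZMod 2))
        + (g (flip2 a' b (fun _ => 0)) + h (flip2 a' b (fun _ => 0)))
        + (g (flip2 a' d (fun _ => 0)) + h (flip2 a' d (fun _ => 0)))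
        + (g (flip2 b d (fun _ => 0)) + h (flip2 b d (fun _ => 0)))
        = (g (fun _ => (0:ZMod 2)) + g (flip2 a' b (fun _ => 0))
            + g (flip2 a' d (fun _ => 0)) + g (flip2 b d (fun _ => 0)))
          + (h (fun _ => (0:ZMod 2)) + h (flip2 a' b (fun _ => 0))
            + h (flip2 a' d (fun _ => 0)) + h (flip2 b d (fun _ => 0))) := by ring
    rw [expand, gz, zero_add]
  have Pa := key a ha
  have Pc := key c hc
  have hb1 : h (flip2 a b (fun _ => 0)) = h (flip2 c b (fun _ => 0)) := by
    apply hh; intro i hi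
    have hiA : i ∉ A := Finset.disjoint_right.mp hdisj hi
    have k1 : i ≠ a := fun e => hiA (e ▸ ha)
    have k2 : i ≠ c := fun e => hiA (e ▸ hc)
    simp [flip2, k1, k2]
  have hb2 : h (flip2 a d (fun _ => 0)) = h (flip2 c d (fun _ => 0)) := by
    apply hh; intro i hi
    have hiA : i ∉ A := Finset.disjoint_right.mp hdisj hi
    have k1 : i ≠ a := fun e => hiA (e ▸ ha)
    have k2 : i ≠ c := fun e => hiA (e ▸ hc)
    simp [flip2, k1, k2]
  rw [hb1, hb2] at Pa
  have heq : p {a, b} + p {a, d} + p {b, d} = p {c, b} + p {c, d} + p {b, d} :=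
    Pa.trans Pc.symm
  have h2 := add_right_cancel heq
  rw [h2]
  exact z2_pair2 _ _

lemma forward_case {n : ℕ} (f : (Fin n → ZMod 2) → ZMod 2)
    (p : Finset (Fin n) → ZMod 2) (hp : mldegLE p 2) (hrep : Represents p f)
    (A B : Finset (Fin n)) (hdisj : Disjoint A B)
    (hA2 : 2 ≤ A.card) (hAn : A.card ≤ n - 2) (hn : 4 ≤ n)
    (g h : (Fin n → ZMod 2) → ZMod 2)
    (hg : ∀ x y, (∀ i ∈ A, x i = y i) → g x = g y)
    (hh : ∀ x y, (∀ i ∈ B, x i = y i) → h x = h y)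
    (hsum : ∀ x, (∑ i, x i) = 0 → f x = g x + h x) :
    (graphOf p).SwitchingSeparable := by
  classical
  have K1 := cross_rel f p hp hrep A B hdisj g h hg hh hsum
  obtain ⟨c0, hc0⟩ : A.Nonempty := Finset.card_pos.mp (by omega)
  obtain ⟨d0, hd0'⟩ : (Aᶜ : Finset (Fin n)).Nonempty := Finset.card_pos.mp (by
    rw [Finset.card_compl]
    simp only [Fintype.card_fin]
    omega)
  have hd0 : d0 ∉ A := Finset.mem_compl.mp hd0'
  set U : Set (Fin n) :=
    {i | (if i ∈ A then p {i, d0} + p {c0, d0} else p {c0, i}) = 1} with hUdef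
  refine ⟨↑A, ?_, ?_, U, ?_⟩
  · rwa [Set.ncard_coe_finset]
  · rw [← Finset.coe_compl, Set.ncard_coe_finset, Finset.card_compl]
    simp only [Fintype.card_fin]
    omega
  · intro a ha b hb
    rw [Finset.mem_coe] at ha
    rw [Set.mem_compl_iff, Finset.mem_coe] at hb
    have hne : a ≠ b := fun e => hb (e ▸ ha)
    rintro ⟨-, hadj⟩
    have hrel : p {a, b} = (p {a, d0} + p {c0, d0}) + p {c0, b} :=
      z2_solve (K1 a ha c0 hc0 b d0 hb hd0)
    have hUa : a ∈ U ↔ (p {a, d0} + p {c0, d0} = 1) := by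
      simp [hUdef, Set.mem_setOf_eq, ha]
    have hUb : b ∈ U ↔ (p {c0, b} = 1) := by
      simp [hUdef, Set.mem_setOf_eq, hb]
    have hAdj : (graphOf p).Adj a b ↔ (p {a, b} = 1) := by
      constructor
      · rintro ⟨-, hp0⟩; exact z2_ne_zero.mp hp0
      · intro h1; exact ⟨hne, by rw [h1]; exact one_ne_zero⟩
    refine z2_xor (p {a, d0} + p {c0, d0}) (p {c0, b}) ?_
    calc (p {a, d0} + p {c0, d0} + p {c0, b} = 1) ↔ (p {a, b} = 1) := by rw [hrel]
      _ ↔ (graphOf p).Adj a b := hAdj.symm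
      _ ↔ (a ∈ U ↔ b ∈ U) := hadj
      _ ↔ ((p {a, d0} + p {c0, d0} = 1) ↔ (p {c0, b} = 1)) := iff_congr hUa hUb

lemma forward_degen {n : ℕ} (f : (Fin n → ZMod 2) → ZMod 2)
    (p : Finset (Fin n) → ZMod 2) (hp : mldegLE p 2) (hrep : Represents p f)
    (A B : Finset (Fin n)) (hA : A.card ≤ 1) (hB : B.card ≤ 1) (hn : 4 ≤ n)
    (g h : (Fin n → ZMod 2) → ZMod 2)
    (hg : ∀ x y, (∀ i ∈ A, x i = y i) → g x = g y)
    (hh : ∀ x y, (∀ i ∈ B, x i = y i) → h x = h y)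
    (hsum : ∀ x, (∑ i, x i) = 0 → f x = g x + h x) :
    (graphOf p).SwitchingSeparable := by
  classical
  have K2 : ∀ a b d : Fin n, a ≠ b → a ≠ d → b ≠ d →
      p {a, b} + p {a, d} + p {b, d} = 0 := by
    intro a b d hab had hbd
    have h0 : (∑ i : Fin n, (fun _ => (0:ZMod 2)) i) = 0 := by simp
    have R := rect p hp (fun _ => 0) hab had hbd
    have e1 := sum_flip2 hab (fun _ => (0:ZMod 2)) h0
    have e2 := sum_flip2 had (fun _ => (0:ZMod 2)) h0
    have e3 := sum_flip2 hbd (fun _ => (0:ZMod 2)) h0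
    rw [hrep _ h0, hrep _ e1, hrep _ e2, hrep _ e3, hsum _ h0, hsum _ e1, hsum _ e2,
      hsum _ e3] at R
    have gz := local_cancel g A hA hg (fun _ => 0) hab had hbd
    have hz := local_cancel h B hB hh (fun _ => 0) hab had hbd
    rw [← R]
    have expand : g (fun _ => (0:ZMod 2)) + h (fun _ => (0:ZMod 2))
        + (g (flip2 a b (fun _ => 0)) + h (flip2 a b (fun _ => 0)))
        + (g (flip2 a d (fun _ => 0)) + h (flip2 a d (fun _ => 0)))
        + (g (flip2 b d (fun _ => 0)) + h (flip2 b d (fun _ => 0)))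
        = (g (fun _ => (0:ZMod 2)) + g (flip2 a b (fun _ => 0))
            + g (flip2 a d (fun _ => 0)) + g (flip2 b d (fun _ => 0)))
          + (h (fun _ => (0:ZMod 2)) + h (flip2 a b (fun _ => 0))
            + h (flip2 a d (fun _ => 0)) + h (flip2 b d (fun _ => 0))) := by ring
    rw [expand, gz, hz, add_zero]
  have hn0 : 0 < n := by omega
  have hn1 : 1 < n := by omega
  set z : Fin n := ⟨0, hn0⟩ with hz
  set w : Fin n := ⟨1, hn1⟩ with hw
  have hzw : z ≠ w := by simp [hz, hw, Fin.ext_iff]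
  set r : Fin n → ZMod 2 := fun i => if i = z then 0 else p {i, z} with hr
  have hpr : ∀ i j : Fin n, i ≠ j → p {i, j} = r i + r j := by
    intro i j hij
    by_cases hiz : i = z
    · subst hiz
      simp only [hr, if_pos rfl, if_neg (Ne.symm hij), zero_add]
      rw [Finset.pair_comm]
    by_cases hjz : j = z
    · subst hjz
      simp only [hr, if_pos rfl, if_neg hiz, add_zero]
    · simp only [hr, if_neg hiz, if_neg hjz]
      exact z2_solve3 (K2 i j z hij hiz hjz)
  refine ⟨{z, w}, ?_, ?_, {i | r i = 1}, ?_⟩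
  · rw [Set.ncard_pair hzw]
  · have hc := Set.ncard_add_ncard_compl ({z, w} : Set (Fin n))
    rw [Set.ncard_pair hzw, Nat.card_eq_fintype_card, Fintype.card_fin] at hc
    omega
  · intro a ha b hb
    rw [Set.mem_compl_iff] at hb
    have hne : a ≠ b := fun e => hb (e ▸ ha)
    rintro ⟨-, hadj⟩
    have hAdj : (graphOf p).Adj a b ↔ (p {a, b} = 1) := by
      constructor
      · rintro ⟨-, hp0⟩; exact z2_ne_zero.mp hp0
      · intro h1; exact ⟨hne, by rw [h1]; exact one_ne_zero⟩
    refine z2_xor (r a) (r b) ?_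
    calc (r a + r b = 1) ↔ (p {a, b} = 1) := by rw [hpr a b hne]
      _ ↔ (graphOf p).Adj a b := hAdj.symm
      _ ↔ (a ∈ {i | r i = 1} ↔ b ∈ {i | r i = 1}) := hadj
      _ ↔ ((r a = 1) ↔ (r b = 1)) := by simp [Set.mem_setOf_eq]

lemma mixed_sum {n : ℕ} (p : Finset (Fin n) → ZMod 2) (hp : mldegLE p 2) (W : Set (Fin n))
    [DecidablePred (· ∈ W)] (x : Fin n → ZMod 2) :
    ∑ s ∈ Finset.univ.filter
        (fun s : Finset (Fin n) => ¬(∀ i ∈ s, i ∈ W) ∧ ¬(∀ i ∈ s, i ∉ W)),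
        p s * ∏ i ∈ s, x i
      = ∑ a ∈ Finset.univ.filter (· ∈ W), ∑ b ∈ Finset.univ.filter (· ∉ W),
          p {a, b} * (x a * x b) := by
  classical
  rw [Finset.sum_filter]
  have hterm : ∀ s : Finset (Fin n),
      (if ¬(∀ i ∈ s, i ∈ W) ∧ ¬(∀ i ∈ s, i ∉ W) then p s * ∏ i ∈ s, x i else 0)
      = ∑ a ∈ Finset.univ.filter (· ∈ W), ∑ b ∈ Finset.univ.filter (· ∉ W),
          (if s = {a, b} then p s * ∏ i ∈ s, x i else 0) := by
    intro s
    by_cases hps : p s = 0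
    · simp [hps]
    by_cases hmix : ¬(∀ i ∈ s, i ∈ W) ∧ ¬(∀ i ∈ s, i ∉ W)
    · rw [if_pos hmix]
      obtain ⟨h1, h2⟩ := hmix
      push_neg at h1 h2
      obtain ⟨b0, hb0s, hb0⟩ := h1
      obtain ⟨a0, ha0s, ha0⟩ := h2
      have hne : a0 ≠ b0 := fun e => hb0 (e ▸ ha0)
      have hsub : ({a0, b0} : Finset (Fin n)) ⊆ s :=
        Finset.insert_subset ha0s (Finset.singleton_subset_iff.mpr hb0s)
      have hseq : s = {a0, b0} :=
        (Finset.eq_of_subset_of_card_le hsub (by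
          rw [Finset.card_pair hne]; exact hp s hps)).symm
      have ha_other : ∀ a' ∈ Finset.univ.filter (· ∈ W), a' ≠ a0 →
          (∑ b' ∈ Finset.univ.filter (· ∉ W),
            if s = {a', b'} then p s * ∏ i ∈ s, x i else 0) = 0 := by
        intro a' ha' hne'
        rw [Finset.mem_filter] at ha'
        apply Finset.sum_eq_zero
        intro b' hb'
        rw [Finset.mem_filter] at hb'
        rw [if_neg]
        intro hc
        have hmem : a' ∈ s := hc ▸ Finset.mem_insert_self a' {b'}
        rw [hseq] at hmem
        rcases Finset.mem_insert.mp hmem with e | e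
        · exact hne' e
        · rw [Finset.mem_singleton] at e
          exact hb0 (e ▸ ha'.2)
      have hb_other : ∀ b' ∈ Finset.univ.filter (· ∉ W), b' ≠ b0 →
          (if s = {a0, b'} then p s * ∏ i ∈ s, x i else 0) = 0 := by
        intro b' hb' hne'
        rw [Finset.mem_filter] at hb'
        rw [if_neg]
        intro hc
        have hmem : b' ∈ s := hc ▸ Finset.mem_insert_of_mem (Finset.mem_singleton_self b')
        rw [hseq] at hmem
        rcases Finset.mem_insert.mp hmem with e | e
        · exact hb'.2 (e ▸ ha0)
        · rw [Finset.mem_singleton] at e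
          exact hne' e
      rw [Finset.sum_eq_single_of_mem a0 (by simp [ha0]) ha_other,
        Finset.sum_eq_single_of_mem b0 (by simp [hb0]) hb_other, if_pos hseq]
    · rw [if_neg hmix]
      symm
      apply Finset.sum_eq_zero
      intro a' ha'
      apply Finset.sum_eq_zero
      intro b' hb'
      rw [Finset.mem_filter] at ha' hb'
      rw [if_neg]
      intro hc
      exact hmix ⟨fun hall => hb'.2 (hall b' (hc ▸ by simp)),
        fun hall => (hall a' (hc ▸ by simp)) ha'.2⟩
  rw [Finset.sum_congr rfl (fun s _ => hterm s), Finset.sum_comm]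
  apply Finset.sum_congr rfl
  intro a ha
  rw [Finset.sum_comm]
  apply Finset.sum_congr rfl
  intro b hb
  rw [Finset.mem_filter] at ha hb
  have hne : a ≠ b := fun e => hb.2 (e ▸ ha.2)
  simp [Finset.prod_pair hne]

lemma backward_dir {n : ℕ} (hn : 4 ≤ n) (f : (Fin n → ZMod 2) → ZMod 2)
    (p : Finset (Fin n) → ZMod 2) (hp : mldegLE p 2) (hrep : Represents p f)
    (hs : (graphOf p).SwitchingSeparable) : EbfSeparable f := by
  classical
  obtain ⟨W, hW2, hWc2, U, hU⟩ := hs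
  set A : Finset (Fin n) := Finset.univ.filter (· ∈ W) with hAdef
  have hAW : (↑A : Set (Fin n)) = W := by ext i; simp [hAdef]
  have hAcW : (↑(Aᶜ) : Set (Fin n)) = Wᶜ := by ext i; simp [hAdef]
  have hAc : Aᶜ = Finset.univ.filter (· ∉ W) := by ext i; simp [hAdef]
  have hcard : 2 ≤ A.card := by rwa [← hAW, Set.ncard_coe_finset] at hW2
  have hcardc : 2 ≤ Aᶜ.card := by rwa [← hAcW, Set.ncard_coe_finset] at hWc2
  have hcardtot : A.card + Aᶜ.card = n := by
    rw [Finset.card_add_card_compl, Fintype.card_fin]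
  set χ : Fin n → ZMod 2 := fun i => if i ∈ U then 1 else 0 with hχ
  have hcross : ∀ a ∈ A, ∀ b ∈ Aᶜ, p {a, b} = χ a + χ b := by
    intro a ha b hb
    rw [Finset.mem_compl] at hb
    have haW : a ∈ W := by rw [hAdef, Finset.mem_filter] at ha; exact ha.2
    have hbW : b ∉ W := fun hc => hb (by rw [hAdef, Finset.mem_filter]; exact ⟨Finset.mem_univ b, hc⟩)
    have hne : a ≠ b := fun e => hbW (e ▸ haW)
    have hnadj := hU a haW b hbW
    have hiff : ¬((graphOf p).Adj a b ↔ (a ∈ U ↔ b ∈ U)) := fun hc => hnadj ⟨hne, hc⟩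
    by_cases ha' : a ∈ U <;> by_cases hb' : b ∈ U
    · have hnadj' : ¬ (graphOf p).Adj a b :=
        fun hc => hiff (iff_of_true hc (iff_of_true ha' hb'))
      have hp0 : p {a, b} = 0 := by
        by_contra hc
        exact hnadj' ⟨hne, hc⟩
      rw [hp0]
      simp [hχ, ha', hb']
      decide
    · have hadj' : (graphOf p).Adj a b := by
        by_contra hc
        exact hiff (iff_of_false hc (fun hiff' => hb' (hiff'.mp ha')))
      rw [z2_ne_zero.mp hadj'.2]
      simp [hχ, ha', hb']
    · have hadj' : (graphOf p).Adj a b := by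
        by_contra hc
        exact hiff (iff_of_false hc (fun hiff' => ha' (hiff'.mpr hb')))
      rw [z2_ne_zero.mp hadj'.2]
      simp [hχ, ha', hb']
    · have hnadj' : ¬ (graphOf p).Adj a b :=
        fun hc => hiff (iff_of_true hc (iff_of_false ha' hb'))
      have hp0 : p {a, b} = 0 := by
        by_contra hc
        exact hnadj' ⟨hne, hc⟩
      rw [hp0]
      simp [hχ, ha', hb']
  set g : (Fin n → ZMod 2) → ZMod 2 := fun x =>
    (∑ s ∈ Finset.univ.filter (fun s : Finset (Fin n) => ∀ i ∈ s, i ∈ W),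
      p s * ∏ i ∈ s, x i)
      + (∑ i ∈ A, χ i * x i) * (∑ i ∈ A, x i) with hgdef
  set h : (Fin n → ZMod 2) → ZMod 2 := fun x =>
    (∑ s ∈ Finset.univ.filter
        (fun s : Finset (Fin n) => ¬(∀ i ∈ s, i ∈ W) ∧ (∀ i ∈ s, i ∉ W)),
      p s * ∏ i ∈ s, x i)
      + (∑ i ∈ Aᶜ, χ i * x i) * (∑ i ∈ Aᶜ, x i) with hhdef
  refine ⟨A, Aᶜ, disjoint_compl_right, by omega, by omega, g, h, ?_, ?_, ?_⟩
  · intro x y hxy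
    rw [hgdef]
    simp only
    congr 1
    · apply Finset.sum_congr rfl
      intro s hs
      rw [Finset.mem_filter] at hs
      congr 1
      apply Finset.prod_congr rfl
      intro i hi
      exact hxy i (by rw [hAdef, Finset.mem_filter]; exact ⟨Finset.mem_univ i, hs.2 i hi⟩)
    · congr 1
      · apply Finset.sum_congr rfl
        intro i hi
        rw [hxy i hi]
      · apply Finset.sum_congr rfl
        intro i hi
        rw [hxy i hi]
  · intro x y hxy
    rw [hhdef]
    simp only
    congr 1
    · apply Finset.sum_congr rfl
      intro s hs
      rw [Finset.mem_filter] at hs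
      congr 1
      apply Finset.prod_congr rfl
      intro i hi
      refine hxy i ?_
      rw [Finset.mem_compl, hAdef, Finset.mem_filter]
      exact fun hc => hs.2.2 i hi hc.2
    · congr 1
      · apply Finset.sum_congr rfl
        intro i hi
        rw [hxy i hi]
      · apply Finset.sum_congr rfl
        intro i hi
        rw [hxy i hi]
  · intro x hx
    rw [← hrep x hx]
    have split1 := Finset.sum_filter_add_sum_filter_not Finset.univ
      (fun s : Finset (Fin n) => ∀ i ∈ s, i ∈ W) (fun s => p s * ∏ i ∈ s, x i)
    have split2 := Finset.sum_filter_add_sum_filter_not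
      (Finset.univ.filter (fun s : Finset (Fin n) => ¬∀ i ∈ s, i ∈ W))
      (fun s : Finset (Fin n) => ∀ i ∈ s, i ∉ W) (fun s => p s * ∏ i ∈ s, x i)
    rw [Finset.filter_filter, Finset.filter_filter] at split2
    have hS : (∑ i ∈ Aᶜ, x i) = ∑ i ∈ A, x i := by
      apply z2_cancel
      rw [Finset.sum_add_sum_compl]
      exact hx
    have hT3 : ∑ s ∈ Finset.univ.filter
          (fun s : Finset (Fin n) => ¬(∀ i ∈ s, i ∈ W) ∧ ¬(∀ i ∈ s, i ∉ W)),
          p s * ∏ i ∈ s, x i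
        = (∑ i ∈ A, χ i * x i) * (∑ i ∈ Aᶜ, x i)
          + (∑ i ∈ A, x i) * (∑ i ∈ Aᶜ, χ i * x i) := by
      rw [mixed_sum p hp W x, ← hAdef, ← hAc]
      rw [Finset.sum_mul_sum, Finset.sum_mul_sum]
      rw [← Finset.sum_add_distrib]
      apply Finset.sum_congr rfl
      intro a ha
      rw [← Finset.sum_add_distrib]
      apply Finset.sum_congr rfl
      intro b hb
      rw [hcross a ha b hb]
      ring
    calc mleval p x
        = (∑ s ∈ Finset.univ.filter (fun s : Finset (Fin n) => ∀ i ∈ s, i ∈ W),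
            p s * ∏ i ∈ s, x i)
          + ((∑ s ∈ Finset.univ.filter
              (fun s : Finset (Fin n) => ¬(∀ i ∈ s, i ∈ W) ∧ (∀ i ∈ s, i ∉ W)),
              p s * ∏ i ∈ s, x i)
            + ∑ s ∈ Finset.univ.filter
              (fun s : Finset (Fin n) => ¬(∀ i ∈ s, i ∈ W) ∧ ¬(∀ i ∈ s, i ∉ W)),
              p s * ∏ i ∈ s, x i) := by
          rw [mleval, ← split1, ← split2]
      _ = g x + h x := by
          rw [hT3, hgdef, hhdef]
          simp only
          rw [hS]
          ring
  
theorem ebf_separable_iff_graph_separable (n : ℕ) (h4 : 4 ≤ n)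
    (f : (Fin n → ZMod 2) → ZMod 2) (p : Finset (Fin n) → ZMod 2)
    (hp : mldegLE p 2) (hrep : Represents p f) :
    EbfSeparable f ↔ (graphOf p).SwitchingSeparable := by
  constructor
  · rintro ⟨A, B, hdisj, hA, hB, g, h, hg, hh, hsum⟩
    by_cases hA2 : 2 ≤ A.card
    · exact forward_case f p hp hrep A B hdisj hA2 hA h4 g h hg hh hsum
    · by_cases hB2 : 2 ≤ B.card
      · exact forward_case f p hp hrep B A hdisj.symm hB2 hB h4 h g hh hg
          (fun x hx => by rw [hsum x hx, add_comm])
      · exact forward_degen f p hp hrep A B (by omega) (by omega) h4 g h hg hh hsum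
  · exact backward_dir h4 f p hp hrep
end

section
/- Let λ be an extended Boolean function in n+1 arguments and let Q_λ be the n-ary operation on Σ = {0,1}² defined by the predicate: Q_λ⟨[x_0,y_0],…,[x_n,y_n]⟩ holds iff x_0+⋯+x_n = 0 and y_0+⋯+y_n = λ(x_0,…,x_n) (mod 2). Then Q_λ is an n-ary quasigroup of order 4: fixing any n of the n+1 coordinates uniquely determines the remaining one. -/
theorem wreath_is_quasigroup (n : ℕ) (lam : (Fin (n + 1) → ZMod 2) → ZMod 2)
    (k : Fin (n + 1)) (z : Fin (n + 1) → ZMod 2 × ZMod 2) :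
    ∃! a : ZMod 2 × ZMod 2,
      (∑ i, (Function.update z k a i).1) = 0 ∧
      (∑ i, (Function.update z k a i).2) = lam (fun i => (Function.update z k a i).1) := by
  classical
  set z1 : Fin (n+1) → ZMod 2 := fun i => (z i).1 with hz1
  set z2 : Fin (n+1) → ZMod 2 := fun i => (z i).2 with hz2
  have hup1 : ∀ (a : ZMod 2 × ZMod 2), (fun i => (Function.update z k a i).1)
      = Function.update z1 k a.1 := by
    intro a; funext i
    exact Function.apply_update (fun _ p => p.1) z k a i
  have hup2 : ∀ (a : ZMod 2 × ZMod 2), (fun i => (Function.update z k a i).2)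
      = Function.update z2 k a.2 := by
    intro a; funext i
    exact Function.apply_update (fun _ p => p.2) z k a i
  set S1 : ZMod 2 := ∑ i ∈ Finset.univ.erase k, z1 i with hS1
  set S2 : ZMod 2 := ∑ i ∈ Finset.univ.erase k, z2 i with hS2
  have hsum1 : ∀ a : ZMod 2 × ZMod 2,
      (∑ i, (Function.update z k a i).1) = a.1 + S1 := by
    intro a
    have : (∑ i, (Function.update z k a i).1) = ∑ i, Function.update z1 k a.1 i := by
      rw [show (fun i => (Function.update z k a i).1) = Function.update z1 k a.1 from hup1 a]
    rw [this, Finset.sum_update_of_mem (Finset.mem_univ k), ← Finset.erase_eq]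
  have hsum2 : ∀ a : ZMod 2 × ZMod 2,
      (∑ i, (Function.update z k a i).2) = a.2 + S2 := by
    intro a
    have : (∑ i, (Function.update z k a i).2) = ∑ i, Function.update z2 k a.2 i := by
      rw [show (fun i => (Function.update z k a i).2) = Function.update z2 k a.2 from hup2 a]
    rw [this, Finset.sum_update_of_mem (Finset.mem_univ k), ← Finset.erase_eq]
  refine ⟨(S1, lam (Function.update z1 k S1) + S2), ⟨?_, ?_⟩, ?_⟩
  · rw [hsum1]; exact CharTwo.add_self_eq_zero S1
  · rw [hsum2, hup1]
    simp only []
    rw [add_assoc, CharTwo.add_self_eq_zero, add_zero]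
  · rintro b ⟨h1, h2⟩
    rw [hsum1] at h1
    rw [hsum2, hup1] at h2
    have hb1 : b.1 = S1 := by
      have := congrArg (· + S1) h1
      simpa [add_assoc, CharTwo.add_self_eq_zero] using this
    have hb2 : b.2 = lam (Function.update z1 k S1) + S2 := by
      rw [hb1] at h2
      have := congrArg (· + S2) h2
      simpa [add_assoc, CharTwo.add_self_eq_zero] using this
    exact Prod.ext hb1 hb2
end
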